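/- arXiv:q-alg/9507014 — 6 statements merged into one kernel-verified Lean document; each statement's English description precedes it below -/
import Mathlib

section
/- For every integer n ≥ 2 and every m = (m_1,…,m_{n−1}) ∈ (ℤ_{≥0})^{n−1}, the number of nodes of the parent associated to m equals n·m^T C^{−1} m, i.e. Σ_{i=1}^N h_i·(w_1+⋯+w_i) = n·Σ_{s,t=1}^{n−1} m_s (C^{−1})_{st} m_t; in particular n·m^T C^{−1} m is a nonnegative integer. -/
/-- The entries of the inverse Cartan matrix of `sl(n)`:
`(C⁻¹)_{ij} = i(n-j)/n` for `i ≤ j` and `(C⁻¹)_{ij} = j(n-i)/n` for `i > j`. -/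
def cinv (n i j : ℕ) : ℚ :=
  if i ≤ j then (i : ℚ) * ((n : ℚ) - (j : ℚ)) / (n : ℚ)
  else (j : ℚ) * ((n : ℚ) - (i : ℚ)) / (n : ℚ)

private lemma gauss_q (c : ℕ) : ∑ i ∈ Finset.Icc 1 c, (i : ℚ) = c * (c + 1) / 2 := by
  induction c with
  | zero => simp
  | succ c ih =>
    rw [Finset.sum_Icc_succ_top (by omega), ih]
    push_cast
    ring

private lemma abel_sq (g : ℕ → ℚ) (M : ℕ) :
    2 * ∑ i ∈ Finset.Icc 1 M, g i * (∑ j ∈ Finset.Icc 1 i, g j)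
      = (∑ i ∈ Finset.Icc 1 M, g i) ^ 2 + ∑ i ∈ Finset.Icc 1 M, (g i) ^ 2 := by
  induction M with
  | zero => simp
  | succ M ih =>
    simp only [Finset.sum_Icc_succ_top (show 1 ≤ M + 1 by omega)]
    linear_combination ih

private lemma initseg (N : ℕ) (T : Finset ℕ) (hsub : T ⊆ Finset.Icc 1 N)
    (hcl : ∀ i j : ℕ, 1 ≤ i → i ≤ j → j ∈ T → i ∈ T) :
    T = Finset.Icc 1 T.card := by
  rcases T.eq_empty_or_nonempty with hT | hT
  · simp [hT]
  · obtain ⟨M, hM, hle⟩ : ∃ M, M ∈ T ∧ ∀ x ∈ T, x ≤ M :=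
      ⟨T.max' hT, T.max'_mem hT, fun x hx => Finset.le_max' T x hx⟩
    have hTeq : T = Finset.Icc 1 M := by
      ext x
      simp only [Finset.mem_Icc]
      constructor
      · intro hx
        exact ⟨(Finset.mem_Icc.mp (hsub hx)).1, hle x hx⟩
      · intro hx
        exact hcl x _ hx.1 hx.2 hM
    have hcard : T.card = M := by
      rw [hTeq, Nat.card_Icc]
      omega
    rw [hcard]
    exact hTeq

private lemma triple_swap (I K : Finset ℕ) (f g : ℕ → ℕ → ℚ) :
    ∑ s ∈ I, ∑ t ∈ I, ∑ k ∈ K, f k s * g k t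
      = ∑ k ∈ K, (∑ s ∈ I, f k s) * (∑ t ∈ I, g k t) := by
  have e1 : ∀ s : ℕ, ∑ t ∈ I, ∑ k ∈ K, f k s * g k t
      = ∑ k ∈ K, ∑ t ∈ I, f k s * g k t := fun s => Finset.sum_comm
  simp only [e1]
  rw [Finset.sum_comm]
  refine Finset.sum_congr rfl fun k _ => ?_
  rw [Finset.sum_mul_sum]

/-- For every `n ≥ 2` and `m = (m_1, …, m_{n-1}) ∈ (ℤ_{≥0})^{n-1}`, the number
of nodes of the parent associated to `m` equals `n · mᵀ C⁻¹ m`, i.e.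
`Σ_{i=1}^N h_i (w_1 + ⋯ + w_i) = n Σ_{s,t=1}^{n-1} m_s (C⁻¹)_{st} m_t`.
Here `N = m_1 + ⋯ + m_{n-1}`, `(h_1, …, h_N)` is the weakly decreasing sequence containing
each value `i ∈ {1, …, n-1}` exactly `m_i` times, `h_0 = n`, and `w_i = 2n - h_{i-1} - h_i`.
In particular `n · mᵀ C⁻¹ m` is a nonnegative integer (being the number of nodes, a natural
number). -/
theorem parent_node_count (n : ℕ) (hn : 2 ≤ n) (m : ℕ → ℕ)
    (N : ℕ) (hN : N = ∑ i ∈ Finset.Icc 1 (n - 1), m i)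
    (h : ℕ → ℕ) (hh0 : h 0 = n)
    (hdec : ∀ i j : ℕ, 1 ≤ i → i ≤ j → j ≤ N → h j ≤ h i)
    (hcount : ∀ i ∈ Finset.Icc 1 (n - 1),
      ((Finset.Icc 1 N).filter (fun a => h a = i)).card = m i)
    (w : ℕ → ℕ)
    (hw : ∀ i ∈ Finset.Icc 1 N, (w i : ℤ) = 2 * n - h (i - 1) - h i) :
    ((∑ i ∈ Finset.Icc 1 N, h i * ∑ j ∈ Finset.Icc 1 i, w j : ℕ) : ℚ) =
      (n : ℚ) * ∑ s ∈ Finset.Icc 1 (n - 1), ∑ t ∈ Finset.Icc 1 (n - 1),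
        (m s : ℚ) * cinv n s t * (m t : ℚ) := by
  have hn0 : (n : ℚ) ≠ 0 := by positivity
  -- every value h a, for a ∈ [1, N], lies in [1, n-1]
  have hval : ∀ a ∈ Finset.Icc 1 N, h a ∈ Finset.Icc 1 (n - 1) := by
    have hUcard : ((Finset.Icc 1 N).filter (fun a => h a ∈ Finset.Icc 1 (n - 1))).card = N := by
      rw [Finset.card_eq_sum_card_fiberwise (f := h) (t := Finset.Icc 1 (n - 1))
        (s := (Finset.Icc 1 N).filter (fun a => h a ∈ Finset.Icc 1 (n - 1)))
        (fun x hx => (Finset.mem_filter.mp hx).2)]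
      have e : ∀ s ∈ Finset.Icc 1 (n - 1),
          (((Finset.Icc 1 N).filter (fun a => h a ∈ Finset.Icc 1 (n - 1))).filter
            (fun a => h a = s)).card
          = ((Finset.Icc 1 N).filter (fun a => h a = s)).card := by
        intro s hs
        congr 1
        rw [Finset.filter_filter]
        refine Finset.filter_congr fun a _ => ?_
        constructor
        · exact fun hx => hx.2
        · exact fun hx => ⟨hx ▸ hs, hx⟩
      rw [Finset.sum_congr rfl e, Finset.sum_congr rfl hcount]
      exact hN.symm
    have hU : (Finset.Icc 1 N).filter (fun a => h a ∈ Finset.Icc 1 (n - 1))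
        = Finset.Icc 1 N := by
      apply Finset.eq_of_subset_of_card_le (Finset.filter_subset _ _)
      rw [hUcard, Nat.card_Icc]
      omega
    intro a ha
    rw [← hU] at ha
    exact (Finset.mem_filter.mp ha).2
  -- fiberwise summation
  have L3 : ∀ f : ℕ → ℚ, ∑ a ∈ Finset.Icc 1 N, f (h a)
      = ∑ s ∈ Finset.Icc 1 (n - 1), (m s : ℚ) * f s := by
    intro f
    rw [← Finset.sum_fiberwise_of_maps_to hval (fun a => f (h a))]
    refine Finset.sum_congr rfl fun s hs => ?_
    have e : ∀ x ∈ (Finset.Icc 1 N).filter (fun a => h a = s), f (h x) = f s := by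
      intro x hx
      rw [(Finset.mem_filter.mp hx).2]
    rw [Finset.sum_congr rfl e, Finset.sum_const, hcount s hs, nsmul_eq_mul]
  -- counting lemma
  have Lcnt : ∀ M : ℕ, M ≤ n - 1 →
      ∑ k ∈ Finset.Icc 1 (n - 1), (if k ≤ M then (1 : ℚ) else 0) = M := by
    intro M hM
    rw [Finset.sum_boole]
    have e : (Finset.Icc 1 (n - 1)).filter (fun k => k ≤ M) = Finset.Icc 1 M := by
      ext k
      simp only [Finset.mem_filter, Finset.mem_Icc]
      omega
    rw [e, Nat.card_Icc]
    norm_num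
  set c : ℕ → ℕ := fun k => ((Finset.Icc 1 N).filter (fun a => k ≤ h a)).card with hcdef
  have hTk : ∀ k : ℕ, (Finset.Icc 1 N).filter (fun a => k ≤ h a) = Finset.Icc 1 (c k) := by
    intro k
    have hcl : ∀ i j : ℕ, 1 ≤ i → i ≤ j →
        j ∈ (Finset.Icc 1 N).filter (fun a => k ≤ h a) →
        i ∈ (Finset.Icc 1 N).filter (fun a => k ≤ h a) := by
      intro i j h1 hij hj
      rw [Finset.mem_filter, Finset.mem_Icc] at hj ⊢
      exact ⟨⟨h1, le_trans hij hj.1.2⟩, le_trans hj.2 (hdec i j h1 hij hj.1.2)⟩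
    have e := initseg N _ (Finset.filter_subset _ _) hcl
    rw [e]
  have hcA : ∀ k : ℕ, (c k : ℚ)
      = ∑ s ∈ Finset.Icc 1 (n - 1), (m s : ℚ) * (if k ≤ s then 1 else 0) := by
    intro k
    have e := L3 (fun s => if k ≤ s then (1 : ℚ) else 0)
    simp only [Finset.sum_boole] at e
    rw [← e]
  -- partial sums of w
  have L1 : ∀ i : ℕ, i ≤ N → ∑ j ∈ Finset.Icc 1 i, (w j : ℚ)
      = 2 * n * i - n + h i - 2 * ∑ j ∈ Finset.Icc 1 i, (h j : ℚ) := by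
    intro i
    induction i with
    | zero =>
      intro _
      rw [Finset.Icc_eq_empty (by omega)]
      simp [hh0]
    | succ i ih =>
      intro hi
      have hw' : (w (i + 1) : ℚ) = 2 * n - h i - h (i + 1) := by
        have h1 := hw (i + 1) (Finset.mem_Icc.mpr ⟨by omega, hi⟩)
        have h2 : ((w (i + 1) : ℤ) : ℚ)
            = ((2 * (n : ℤ) - (h (i + 1 - 1) : ℤ) - (h (i + 1) : ℤ) : ℤ) : ℚ) := by
          exact_mod_cast congrArg (fun z : ℤ => (z : ℚ)) h1
        simp only [Nat.add_sub_cancel] at h2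
        push_cast at h2
        exact h2
      rw [Finset.sum_Icc_succ_top (show 1 ≤ i + 1 by omega),
          Finset.sum_Icc_succ_top (show 1 ≤ i + 1 by omega), ih (by omega), hw']
      push_cast
      ring
  -- evaluate the LHS
  have hcast : ((∑ i ∈ Finset.Icc 1 N, h i * ∑ j ∈ Finset.Icc 1 i, w j : ℕ) : ℚ)
      = ∑ i ∈ Finset.Icc 1 N, (h i : ℚ) * ∑ j ∈ Finset.Icc 1 i, (w j : ℚ) := by
    push_cast
    rfl
  have hLHS : ∑ i ∈ Finset.Icc 1 N, (h i : ℚ) * ∑ j ∈ Finset.Icc 1 i, (w j : ℚ)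
      = 2 * n * (∑ i ∈ Finset.Icc 1 N, (i : ℚ) * h i)
        - n * (∑ i ∈ Finset.Icc 1 N, (h i : ℚ))
        - (∑ i ∈ Finset.Icc 1 N, (h i : ℚ)) ^ 2 := by
    have e1 : ∑ i ∈ Finset.Icc 1 N, (h i : ℚ) * ∑ j ∈ Finset.Icc 1 i, (w j : ℚ)
        = ∑ i ∈ Finset.Icc 1 N,
            (2 * n * ((i : ℚ) * h i) - n * (h i : ℚ) + (h i : ℚ) ^ 2
              - 2 * ((h i : ℚ) * ∑ j ∈ Finset.Icc 1 i, (h j : ℚ))) := by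
      refine Finset.sum_congr rfl fun i hi => ?_
      rw [L1 i (Finset.mem_Icc.mp hi).2]
      ring
    rw [e1, Finset.sum_sub_distrib, Finset.sum_add_distrib, Finset.sum_sub_distrib,
        ← Finset.mul_sum, ← Finset.mul_sum, ← Finset.mul_sum]
    linear_combination - abel_sq (fun j => (h j : ℚ)) N
  have hX : ∑ i ∈ Finset.Icc 1 N, (i : ℚ) * h i
      = ∑ k ∈ Finset.Icc 1 (n - 1), ((c k : ℚ) * (c k + 1) / 2) := by
    have e1 : ∑ i ∈ Finset.Icc 1 N, (i : ℚ) * h i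
        = ∑ i ∈ Finset.Icc 1 N, ∑ k ∈ Finset.Icc 1 (n - 1),
            (if k ≤ h i then (i : ℚ) else 0) := by
      refine Finset.sum_congr rfl fun i hi => ?_
      rw [← Lcnt (h i) (Finset.mem_Icc.mp (hval i hi)).2, Finset.mul_sum]
      refine Finset.sum_congr rfl fun k _ => ?_
      split <;> simp
    rw [e1, Finset.sum_comm]
    refine Finset.sum_congr rfl fun k _ => ?_
    rw [← Finset.sum_filter, hTk k]
    exact gauss_q (c k)
  have hSN1 : ∑ i ∈ Finset.Icc 1 N, (h i : ℚ) = ∑ k ∈ Finset.Icc 1 (n - 1), (c k : ℚ) := by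
    have e1 : ∑ i ∈ Finset.Icc 1 N, (h i : ℚ)
        = ∑ i ∈ Finset.Icc 1 N, ∑ k ∈ Finset.Icc 1 (n - 1),
            (if k ≤ h i then (1 : ℚ) else 0) := by
      refine Finset.sum_congr rfl fun i hi => ?_
      rw [← Lcnt (h i) (Finset.mem_Icc.mp (hval i hi)).2]
    rw [e1, Finset.sum_comm]
    refine Finset.sum_congr rfl fun k _ => ?_
    rw [Finset.sum_boole, hTk k, Nat.card_Icc]
    simp
  have hSN2 : ∑ i ∈ Finset.Icc 1 N, (h i : ℚ)
      = ∑ s ∈ Finset.Icc 1 (n - 1), (m s : ℚ) * s := L3 (fun s => (s : ℚ))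
  -- evaluate the RHS
  have hnc : ∀ s ∈ Finset.Icc 1 (n - 1), ∀ t ∈ Finset.Icc 1 (n - 1),
      (n : ℚ) * ((m s : ℚ) * cinv n s t * (m t : ℚ))
      = ∑ k ∈ Finset.Icc 1 (n - 1),
          ((n : ℚ) * ((m s : ℚ) * (if k ≤ s then 1 else 0)))
            * ((m t : ℚ) * (if k ≤ t then 1 else 0))
        - ((m s : ℚ) * s) * ((m t : ℚ) * t) := by
    intro s hs t ht
    have h1 : (n : ℚ) * cinv n s t = (if s ≤ t then (s : ℚ) else (t : ℚ)) * n - s * t := by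
      unfold cinv
      split_ifs with hst
      · field_simp
      · field_simp
    have h2 : (if s ≤ t then (s : ℚ) else (t : ℚ))
        = ∑ k ∈ Finset.Icc 1 (n - 1),
            (if k ≤ s then (1 : ℚ) else 0) * (if k ≤ t then 1 else 0) := by
      have e : ∀ k : ℕ, (if k ≤ s then (1 : ℚ) else 0) * (if k ≤ t then 1 else 0)
          = if k ≤ min s t then 1 else 0 := by
        intro k
        by_cases h1' : k ≤ s <;> by_cases h2' : k ≤ t <;>
          simp [h1', h2', le_min_iff]
      rw [Finset.sum_congr rfl fun k _ => e k,
        Lcnt (min s t) (by have := (Finset.mem_Icc.mp hs).2; omega)]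
      split_ifs with hst
      · rw [min_eq_left hst]
      · rw [min_eq_right (le_of_not_ge hst)]
    calc (n : ℚ) * ((m s : ℚ) * cinv n s t * (m t : ℚ))
        = (m s : ℚ) * (m t : ℚ) * ((n : ℚ) * cinv n s t) := by ring
      _ = (m s : ℚ) * (m t : ℚ) *
            ((∑ k ∈ Finset.Icc 1 (n - 1),
              (if k ≤ s then (1 : ℚ) else 0) * (if k ≤ t then 1 else 0)) * n
              - s * t) := by rw [h1, ← h2]
      _ = ∑ k ∈ Finset.Icc 1 (n - 1),
            ((n : ℚ) * ((m s : ℚ) * (if k ≤ s then 1 else 0)))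
              * ((m t : ℚ) * (if k ≤ t then 1 else 0))
          - ((m s : ℚ) * s) * ((m t : ℚ) * t) := by
          rw [Finset.sum_mul, mul_sub, Finset.mul_sum]
          congr 1
          · exact Finset.sum_congr rfl fun k _ => by ring
          · ring
  have hRHS : (n : ℚ) * ∑ s ∈ Finset.Icc 1 (n - 1), ∑ t ∈ Finset.Icc 1 (n - 1),
        (m s : ℚ) * cinv n s t * (m t : ℚ)
      = n * (∑ k ∈ Finset.Icc 1 (n - 1), (c k : ℚ) ^ 2)
        - (∑ s ∈ Finset.Icc 1 (n - 1), (m s : ℚ) * s) ^ 2 := by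
    have e0 : (n : ℚ) * ∑ s ∈ Finset.Icc 1 (n - 1), ∑ t ∈ Finset.Icc 1 (n - 1),
          (m s : ℚ) * cinv n s t * (m t : ℚ)
        = ∑ s ∈ Finset.Icc 1 (n - 1), ∑ t ∈ Finset.Icc 1 (n - 1),
            (∑ k ∈ Finset.Icc 1 (n - 1),
              ((n : ℚ) * ((m s : ℚ) * (if k ≤ s then 1 else 0)))
                * ((m t : ℚ) * (if k ≤ t then 1 else 0))
             - ((m s : ℚ) * s) * ((m t : ℚ) * t)) := by
      rw [Finset.mul_sum]
      refine Finset.sum_congr rfl fun s hs => ?_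
      rw [Finset.mul_sum]
      exact Finset.sum_congr rfl fun t ht => hnc s hs t ht
    rw [e0]
    simp only [Finset.sum_sub_distrib]
    rw [triple_swap]
    rw [show ∑ s ∈ Finset.Icc 1 (n - 1), ∑ t ∈ Finset.Icc 1 (n - 1),
          ((m s : ℚ) * s) * ((m t : ℚ) * t)
        = (∑ s ∈ Finset.Icc 1 (n - 1), (m s : ℚ) * s)
          * (∑ t ∈ Finset.Icc 1 (n - 1), (m t : ℚ) * t) from
      (Finset.sum_mul_sum _ _ _ _).symm]
    congr 1
    · rw [Finset.mul_sum]
      refine Finset.sum_congr rfl fun k _ => ?_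
      rw [← Finset.mul_sum, ← hcA k]
      ring
    · ring
  have hfin : 2 * (n : ℚ) * (∑ k ∈ Finset.Icc 1 (n - 1), ((c k : ℚ) * (c k + 1) / 2))
      - n * (∑ k ∈ Finset.Icc 1 (n - 1), (c k : ℚ))
      = n * ∑ k ∈ Finset.Icc 1 (n - 1), (c k : ℚ) ^ 2 := by
    rw [Finset.mul_sum, Finset.mul_sum, Finset.mul_sum, ← Finset.sum_sub_distrib]
    refine Finset.sum_congr rfl fun k _ => ?_
    ring
  rw [hcast, hLHS, hX]
  nth_rewrite 1 [hSN1]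
  rw [hSN2, hRHS]
  linear_combination hfin
end

section
/- Let n ≥ 2, 0 ≤ k ≤ n−1, m = (m_1,…,m_{n−1}) ∈ (ℤ_{≥0})^{n−1} with k + Σ_{t=1}^{n−1} t·m_t ≡ 0 (mod n), and let L ≥ 0 be an integer with L ≡ 2k (mod n) (the case r = n). Then for every 1 ≤ i ≤ n−1: 2·Σ_{j=1}^{i−1} j·m_{i−j} + i·⌊(L + n − i − 2·Σ_{j=1}^{n−1} j·m_{n−j})/n⌋ = L·(C^{−1})_{n−1,i} − 2·(C^{−1}m)_i. -/
/-- Reversing the summation index on `Icc 1 (N-1)`. -/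
lemma rev_sum (N : ℕ) (f : ℕ → ℚ) :
    ∑ j ∈ Finset.Icc 1 (N - 1), (j : ℚ) * f (N - j)
      = ∑ t ∈ Finset.Icc 1 (N - 1), ((N : ℚ) - (t : ℚ)) * f t := by
  apply Finset.sum_nbij' (i := fun j => N - j) (j := fun t => N - t)
  · intro a ha; simp only [Finset.mem_Icc] at *; omega
  · intro a ha; simp only [Finset.mem_Icc] at *; omega
  · intro a ha; simp only [Finset.mem_Icc] at ha; omega
  · intro a ha; simp only [Finset.mem_Icc] at ha; omega
  · intro a ha; simp only [Finset.mem_Icc] at ha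
    have h2 : ((N - a : ℕ) : ℚ) = (N : ℚ) - a := by
      have : a ≤ N := by omega
      push_cast [this]; ring
    rw [h2]; ring

/-- Let `n ≥ 2`, `0 ≤ k ≤ n-1`, `m ∈ (ℤ_{≥0})^{n-1}` with
`k + Σ_{t=1}^{n-1} t m_t ≡ 0 (mod n)`, and `L ≥ 0` with `L ≡ 2k (mod n)` (the case `r = n`).
Then for every `1 ≤ i ≤ n-1`:
`2 Σ_{j=1}^{i-1} j m_{i-j} + i ⌊(L + n - i - 2 Σ_{j=1}^{n-1} j m_{n-j})/n⌋
  = L (C⁻¹)_{n-1,i} - 2 (C⁻¹ m)_i`. -/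
theorem ell_formula_r_eq_n (n : ℕ) (hn : 2 ≤ n) (k : ℕ) (hk : k ≤ n - 1)
    (m : ℕ → ℕ) (hm : k + ∑ t ∈ Finset.Icc 1 (n - 1), t * m t ≡ 0 [MOD n])
    (L : ℕ) (hL : L ≡ 2 * k [MOD n])
    (i : ℕ) (hi1 : 1 ≤ i) (hi2 : i ≤ n - 1) :
    2 * (∑ j ∈ Finset.Icc 1 (i - 1), (j : ℚ) * (m (i - j) : ℚ))
      + (i : ℚ) * (⌊((L : ℚ) + (n : ℚ) - (i : ℚ)
          - 2 * ∑ j ∈ Finset.Icc 1 (n - 1), (j : ℚ) * (m (n - j) : ℚ)) / (n : ℚ)⌋ : ℤ)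
    = (L : ℚ) * cinv n (n - 1) i
      - 2 * ∑ t ∈ Finset.Icc 1 (n - 1), cinv n i t * (m t : ℚ) := by
  have hn0 : (n : ℚ) ≠ 0 := by positivity
  have hnQ : (0 : ℚ) < n := by positivity
  set A := Finset.Icc 1 (n - 1) with hA
  set Sn : ℕ := ∑ t ∈ A, t * m t with hSn
  set Mn : ℕ := ∑ t ∈ A, m t with hMn
  -- divisibility
  have hdvd : n ∣ L + 2 * Sn := by
    have h1 : L + 2 * Sn ≡ 2 * k + 2 * Sn [MOD n] := hL.add_right _
    have h2 : 2 * k + 2 * Sn ≡ 0 [MOD n] := by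
      have := hm.mul_left 2
      simpa [mul_add, mul_zero] using this
    have := h1.trans h2
    exact (Nat.modEq_zero_iff_dvd).mp this
  obtain ⟨q, hq⟩ := hdvd
  -- rational abbreviations
  set T : ℚ := ∑ t ∈ A, (t : ℚ) * (m t : ℚ) with hT
  set Mq : ℚ := ∑ t ∈ A, (m t : ℚ) with hMq
  have hTS : (Sn : ℚ) = T := by rw [hSn, hT]; push_cast; ring_nf
  have hMM : (Mn : ℚ) = Mq := by rw [hMn, hMq]; push_cast; ring_nf
  have hqQ : (n : ℚ) * q = (L : ℚ) + 2 * T := by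
    have : ((L + 2 * Sn : ℕ) : ℚ) = ((n * q : ℕ) : ℚ) := by rw [hq]
    push_cast at this
    rw [hTS] at this
    linarith
  -- the big sum reindexed
  have hbig : ∑ j ∈ Finset.Icc 1 (n - 1), (j : ℚ) * (m (n - j) : ℚ)
      = (n : ℚ) * Mq - T := by
    rw [rev_sum n (fun t => (m t : ℚ))]
    rw [hMq, hT, Finset.mul_sum, ← Finset.sum_sub_distrib]
    exact Finset.sum_congr rfl fun t _ => by ring
  -- floor computation
  have hfloor : ⌊((L : ℚ) + (n : ℚ) - (i : ℚ)
        - 2 * ∑ j ∈ Finset.Icc 1 (n - 1), (j : ℚ) * (m (n - j) : ℚ)) / (n : ℚ)⌋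
      = (q : ℤ) - 2 * (Mn : ℤ) := by
    rw [hbig]
    have harg : ((L : ℚ) + (n : ℚ) - (i : ℚ) - 2 * ((n : ℚ) * Mq - T)) / (n : ℚ)
        = ((q : ℚ) - 2 * Mq) + (1 - (i : ℚ) / n) := by
      field_simp
      linarith [hqQ]
    rw [harg]
    have hi_pos : (0 : ℚ) < i := by exact_mod_cast hi1
    have hi_lt : (i : ℚ) < n := by
      have : i < n := by omega
      exact_mod_cast this
    rw [Int.floor_eq_iff]
    constructor
    · push_cast
      rw [← hMM]
      push_cast
      have : (i : ℚ) / n < 1 := by rw [div_lt_one hnQ]; exact hi_lt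
      linarith
    · push_cast
      rw [← hMM]
      push_cast
      have : 0 < (i : ℚ) / n := by positivity
      linarith
  rw [hfloor]
  -- cinv (n-1) i value
  have hcinv1 : cinv n (n - 1) i = (i : ℚ) / n := by
    unfold cinv
    have hc : ((n - 1 : ℕ) : ℚ) = (n : ℚ) - 1 := by
      have : 1 ≤ n := by omega
      push_cast [this]; ring
    split_ifs with h
    · have hie : i = n - 1 := by omega
      subst hie
      rw [hc]; ring
    · rw [hc]; ring
  rw [hcinv1]
  -- reindex the i-sum
  rw [rev_sum i (fun t => (m t : ℚ))]
  -- extend to A via indicator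
  set g : ℕ → ℚ := fun t => (if t < i then (i : ℚ) - (t : ℚ) else 0) * (m t : ℚ) with hg
  have hsub : Finset.Icc 1 (i - 1) ⊆ A := by
    intro x hx; simp only [Finset.mem_Icc, hA] at *; omega
  have hext : ∑ t ∈ Finset.Icc 1 (i - 1), ((i : ℚ) - (t : ℚ)) * (m t : ℚ)
      = ∑ t ∈ A, g t := by
    rw [← Finset.sum_subset hsub (fun x hx hx2 => ?_)]
    · exact Finset.sum_congr rfl fun t ht => by
        simp only [Finset.mem_Icc] at ht
        simp [hg, show t < i by omega]
    · simp only [Finset.mem_Icc, hA] at hx hx2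
      simp [hg, show ¬ x < i by omega]
  rw [hext]
  set P : ℚ := ∑ t ∈ A, g t with hP
  set Cq : ℚ := ∑ t ∈ A, cinv n i t * (m t : ℚ) with hCq
  -- the key zero-sum
  have hzero : 2 * P + (2 * (i : ℚ) / n) * T - 2 * (i : ℚ) * Mq + 2 * Cq = 0 := by
    have : ∑ t ∈ A, (2 * g t + (2 * (i : ℚ) / n) * ((t : ℚ) * (m t : ℚ))
        - 2 * (i : ℚ) * (m t : ℚ) + 2 * (cinv n i t * (m t : ℚ))) = 0 := by
      apply Finset.sum_eq_zero
      intro t ht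
      simp only [Finset.mem_Icc, hA] at ht
      have htn : (t : ℚ) < n := by
        have : t < n := by omega
        exact_mod_cast this
      rcases lt_or_ge t i with h | h
      · have hc : cinv n i t = (t : ℚ) * ((n : ℚ) - (i : ℚ)) / n := by
          unfold cinv; rw [if_neg (show ¬ i ≤ t by omega)]
        have hgt : g t = ((i : ℚ) - (t : ℚ)) * (m t : ℚ) := by
          simp only [hg]; rw [if_pos h]
        rw [hc, hgt]; field_simp; ring
      · have hc : cinv n i t = (i : ℚ) * ((n : ℚ) - (t : ℚ)) / n := by
          unfold cinv; rw [if_pos h]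
        have hgt : g t = 0 := by
          simp only [hg]; rw [if_neg (show ¬ t < i by omega)]; ring
        rw [hc, hgt]; field_simp; ring
    rw [Finset.sum_add_distrib, Finset.sum_sub_distrib, Finset.sum_add_distrib,
      ← Finset.mul_sum, ← Finset.mul_sum, ← Finset.mul_sum, ← Finset.mul_sum] at this
    rw [hP, hT, hMq, hCq]
    linarith [this]
  -- finish
  rw [show ((((q : ℤ) - 2 * (Mn : ℤ)) : ℤ) : ℚ) = (q : ℚ) - 2 * (Mn : ℚ) by
    push_cast; ring]
  rw [hMM]
  linear_combination hzero + ((i : ℚ) / n) * hqQ - ((i : ℚ) * (q : ℚ)) * mul_inv_cancel₀ hn0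
end

section
/- Let n ≥ 2, 0 ≤ k ≤ n−1, m = (m_1,…,m_{n−1}) ∈ (ℤ_{≥0})^{n−1} with k + Σ_{t=1}^{n−1} t·m_t ≡ 0 (mod n), let r be an integer with 0 < r ≤ n, and let L ≥ 0 be an integer with L − 2k ≡ r (mod n). Then for every 1 ≤ i ≤ n−1: 2·Σ_{j=1}^{i−1} j·m_{i−j} − max(i−r,0) + i·⌊(L + n − i + max(i−r,0) − 2·Σ_{j=1}^{n−1} j·m_{n−j})/n⌋ = (C^{−1}(L·e_{n−1} + e_r − 2m))_i, where e_n := 0. In particular this quantity is an integer. -/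
lemma my_reindex (N : ℕ) (g : ℕ → ℚ) :
    ∑ j ∈ Finset.Icc 1 (N - 1), (j : ℚ) * g (N - j)
      = ∑ t ∈ Finset.Icc 1 (N - 1), ((N : ℚ) - (t : ℚ)) * g t := by
  refine Finset.sum_nbij' (fun j => N - j) (fun t => N - t) ?_ ?_ ?_ ?_ ?_ <;>
    intro a ha <;> simp only [Finset.mem_Icc] at ha ⊢
  · omega
  · omega
  · omega
  · omega
  · have h1 : ((N - a : ℕ) : ℚ) = (N : ℚ) - (a : ℚ) := by
      have : a ≤ N := by omega
      push_cast [this]; ring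
    rw [h1]; ring

lemma cinv_eq (n i t : ℕ) (hn : 0 < n) (hi : i ≤ n) :
    cinv n i t = (i : ℚ) * ((n : ℚ) - (t : ℚ)) / (n : ℚ)
      - ((max ((i : ℤ) - (t : ℤ)) 0 : ℤ) : ℚ) := by
  have hn0 : (n : ℚ) ≠ 0 := by positivity
  unfold cinv
  split
  · next h =>
    have : max ((i : ℤ) - (t : ℤ)) 0 = 0 := by omega
    rw [this]; push_cast; ring
  · next h =>
    have ht : t < i := by omega
    have : max ((i : ℤ) - (t : ℤ)) 0 = (i : ℤ) - (t : ℤ) := by omega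
    rw [this]; push_cast
    field_simp
    ring

/-- Let `n ≥ 2`, `0 ≤ k ≤ n-1`, `m ∈ (ℤ_{≥0})^{n-1}` with
`k + Σ_{t=1}^{n-1} t m_t ≡ 0 (mod n)`, let `0 < r ≤ n`, and let `L ≥ 0` with
`L - 2k ≡ r (mod n)` (stated as `L ≡ 2k + r (mod n)`). Then for every `1 ≤ i ≤ n-1`:
`2 Σ_{j=1}^{i-1} j m_{i-j} - max(i-r,0)
   + i ⌊(L + n - i + max(i-r,0) - 2 Σ_{j=1}^{n-1} j m_{n-j})/n⌋
 = (C⁻¹ (L e_{n-1} + e_r - 2m))_i`,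
with the convention `e_n := 0`.  In particular this quantity is an integer (the left-hand
side is manifestly an integer). -/
theorem ell_formula_general_r (n : ℕ) (hn : 2 ≤ n) (k : ℕ) (hk : k ≤ n - 1)
    (m : ℕ → ℕ) (hm : k + ∑ t ∈ Finset.Icc 1 (n - 1), t * m t ≡ 0 [MOD n])
    (r : ℕ) (hr1 : 0 < r) (hr2 : r ≤ n)
    (L : ℕ) (hL : L ≡ 2 * k + r [MOD n])
    (i : ℕ) (hi1 : 1 ≤ i) (hi2 : i ≤ n - 1) :
    2 * (∑ j ∈ Finset.Icc 1 (i - 1), (j : ℚ) * (m (i - j) : ℚ))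
      - ((max ((i : ℤ) - (r : ℤ)) 0 : ℤ) : ℚ)
      + (i : ℚ) * (⌊((L : ℚ) + (n : ℚ) - (i : ℚ) + ((max ((i : ℤ) - (r : ℤ)) 0 : ℤ) : ℚ)
          - 2 * ∑ j ∈ Finset.Icc 1 (n - 1), (j : ℚ) * (m (n - j) : ℚ)) / (n : ℚ)⌋ : ℤ)
    = (L : ℚ) * cinv n i (n - 1) + (if r = n then 0 else cinv n i r)
      - 2 * ∑ t ∈ Finset.Icc 1 (n - 1), cinv n i t * (m t : ℚ) := by
  have hnpos : 0 < n := by omega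
  have hn0 : (n : ℚ) ≠ 0 := by positivity
  have hin : i ≤ n := by omega
  -- abbreviations
  set c : ℤ := max ((i : ℤ) - (r : ℤ)) 0 with hc
  -- the B sum, as rationals and integers
  have hBrw : (∑ j ∈ Finset.Icc 1 (n - 1), (j : ℚ) * (m (n - j) : ℚ))
      = ∑ t ∈ Finset.Icc 1 (n - 1), ((n : ℚ) - (t : ℚ)) * (m t : ℚ) :=
    my_reindex n (fun t => (m t : ℚ))
  set Bq : ℚ := ∑ t ∈ Finset.Icc 1 (n - 1), ((n : ℚ) - (t : ℚ)) * (m t : ℚ) with hBq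
  -- integer sums
  set S : ℕ := ∑ t ∈ Finset.Icc 1 (n - 1), t * m t with hS
  set M : ℕ := ∑ t ∈ Finset.Icc 1 (n - 1), m t with hM
  have hBqval : Bq = (n : ℚ) * (M : ℚ) - (S : ℚ) := by
    rw [hBq, hM, hS]
    push_cast
    rw [Finset.mul_sum, ← Finset.sum_sub_distrib]
    apply Finset.sum_congr rfl
    intro t _
    ring
  -- divisibility facts
  have hd1 : (n : ℤ) ∣ (k : ℤ) + (S : ℤ) := by
    have := (Nat.modEq_iff_dvd' (Nat.zero_le _)).mp hm.symm
    simpa using Int.natCast_dvd_natCast.mpr this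
  have hd2 : (n : ℤ) ∣ ((2 * k + r : ℕ) : ℤ) - (L : ℤ) := hL.dvd
  obtain ⟨a, ha⟩ := hd1
  obtain ⟨b, hb⟩ := hd2
  -- the integer y with n*y = L + n - r - 2*B  where B = n*M - S
  set y : ℤ := 2 * a - b + 1 - 2 * (M : ℤ) with hy
  have hrel : (n : ℤ) * y = (L : ℤ) + (n : ℤ) - (r : ℤ) - 2 * ((n : ℤ) * M - (S : ℤ)) := by
    have hb' : ((2 * k + r : ℕ) : ℤ) = 2 * (k : ℤ) + (r : ℤ) := by push_cast; ring
    rw [hb'] at hb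
    rw [hy]
    linarith [ha, hb]
  have hrelq : (n : ℚ) * (y : ℚ) = (L : ℚ) + (n : ℚ) - (r : ℚ) - 2 * Bq := by
    rw [hBqval]
    have h := congrArg (fun z : ℤ => (z : ℚ)) hrel
    push_cast at h
    linarith
  -- floor computation
  have hfloor : ⌊((L : ℚ) + (n : ℚ) - (i : ℚ) + (c : ℚ) - 2 * Bq) / (n : ℚ)⌋ = y := by
    have hc' : (0 : ℤ) ≤ c + (r : ℤ) - (i : ℤ) ∧ c + (r : ℤ) - (i : ℤ) < n := by
      rcases le_or_gt (r : ℤ) (i : ℤ) with h | h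
      · have : c = (i : ℤ) - r := by rw [hc]; omega
        omega
      · have : c = 0 := by rw [hc]; omega
        omega
    set c' : ℤ := c + (r : ℤ) - (i : ℤ) with hc'def
    have harg : (L : ℚ) + (n : ℚ) - (i : ℚ) + (c : ℚ) - 2 * Bq
        = (n : ℚ) * (y : ℚ) + (c' : ℚ) := by
      rw [hrelq, hc'def]; push_cast; ring
    rw [harg]
    have : ((n : ℚ) * (y : ℚ) + (c' : ℚ)) / (n : ℚ) = (y : ℚ) + (c' : ℚ) / (n : ℚ) := by
      field_simp
    rw [this]
    have h0 : (0 : ℚ) ≤ (c' : ℚ) := by exact_mod_cast hc'.1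
    have h1 : (c' : ℚ) / (n : ℚ) < 1 := by
      rw [div_lt_one (by positivity : (0:ℚ) < (n:ℚ))]
      exact_mod_cast hc'.2
    have h2 : (0 : ℚ) ≤ (c' : ℚ) / (n : ℚ) := by positivity
    rw [Int.floor_eq_iff]
    constructor
    · linarith
    · push_cast; linarith
  -- rewrite the A sum
  have hArw : (∑ j ∈ Finset.Icc 1 (i - 1), (j : ℚ) * (m (i - j) : ℚ))
      = ∑ t ∈ Finset.Icc 1 (i - 1), ((i : ℚ) - (t : ℚ)) * (m t : ℚ) :=
    my_reindex i (fun t => (m t : ℚ))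
  set Aq : ℚ := ∑ t ∈ Finset.Icc 1 (i - 1), ((i : ℚ) - (t : ℚ)) * (m t : ℚ) with hAq
  -- the cinv sum
  have hcinvsum : (∑ t ∈ Finset.Icc 1 (n - 1), cinv n i t * (m t : ℚ))
      = (i : ℚ) / (n : ℚ) * Bq - Aq := by
    have step1 : (∑ t ∈ Finset.Icc 1 (n - 1), cinv n i t * (m t : ℚ))
        = ∑ t ∈ Finset.Icc 1 (n - 1),
            (((i : ℚ) / (n : ℚ)) * (((n : ℚ) - (t : ℚ)) * (m t : ℚ))
              - ((max ((i : ℤ) - (t : ℤ)) 0 : ℤ) : ℚ) * (m t : ℚ)) := by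
      apply Finset.sum_congr rfl
      intro t _
      rw [cinv_eq n i t hnpos hin]; ring
    rw [step1, Finset.sum_sub_distrib, ← Finset.mul_sum, ← hBq]
    congr 1
    -- the max sum equals Aq
    have hsub : Finset.Icc 1 (i - 1) ⊆ Finset.Icc 1 (n - 1) := by
      apply Finset.Icc_subset_Icc_right; omega
    rw [hAq]
    rw [← Finset.sum_subset hsub (fun t ht hnt => ?_)]
    · apply Finset.sum_congr rfl
      intro t ht
      simp only [Finset.mem_Icc] at ht
      have : max ((i : ℤ) - (t : ℤ)) 0 = (i : ℤ) - (t : ℤ) := by omega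
      rw [this]; push_cast; ring
    · simp only [Finset.mem_Icc] at ht hnt
      have : max ((i : ℤ) - (t : ℤ)) 0 = 0 := by omega
      rw [this]; simp
  -- the two single cinv entries
  have hcinv1 : cinv n i (n - 1) = (i : ℚ) / (n : ℚ) := by
    unfold cinv
    rw [if_pos hi2]
    have : ((n - 1 : ℕ) : ℚ) = (n : ℚ) - 1 := by
      have : 1 ≤ n := by omega
      push_cast [this]; ring
    rw [this]; ring
  have hcinv2 : (if r = n then (0:ℚ) else cinv n i r)
      = (i : ℚ) * ((n : ℚ) - (r : ℚ)) / (n : ℚ) - (c : ℚ) := by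
    split
    · next h =>
      subst h
      have : c = 0 := by rw [hc]; omega
      rw [this]; simp
    · next h =>
      rw [cinv_eq n i r hnpos hin, hc]
  -- put it all together
  rw [hBrw, hfloor, hArw, hcinvsum, hcinv1, hcinv2]
  have hy2 : (y : ℚ) = ((L : ℚ) + (n : ℚ) - (r : ℚ) - 2 * Bq) / (n : ℚ) := by
    rw [eq_div_iff hn0]; linarith [hrelq]
  rw [hy2]
  field_simp
  ring
end

section
/- Let n ≥ 2, 0 ≤ k ≤ n−1 and L ≥ 0. The map p ↦ M(p) assigning to each path its interpolating matrix is a bijection from the set of paths P_L(2Λ_0,Λ_k) onto the set G_L(2Λ_0,Λ_k) of interpolating matrices satisfying conditions K1, K2 and K3. -/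
/-- The `i`-th entry `h_i` of the height sequence of an interpolating matrix, `h_0 = n`. -/
def hseq (n : ℕ) (G : List (ℕ × ℕ)) (i : ℕ) : ℕ :=
  if i = 0 then n else (G.getD (i - 1) (0, 0)).2

/-- The `i`-th entry `w_i` (for `1 ≤ i ≤ N`) of the width sequence. -/
def wseq (G : List (ℕ × ℕ)) (i : ℕ) : ℕ := (G.getD (i - 1) (0, 0)).1

/-- `W = w_1 + ⋯ + w_N`. -/
def Wsum (G : List (ℕ × ℕ)) : ℕ := ∑ i ∈ Finset.Icc 1 G.length, wseq G i

/-- `H = h_1 + ⋯ + h_N`. -/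
def Hsum (G : List (ℕ × ℕ)) : ℕ := ∑ i ∈ Finset.Icc 1 G.length, hseq 0 G i

/-- Membership in `G_L(2Λ_0, Λ_k)`: an interpolating matrix (a finite sequence of pairs of
positive integers) satisfying (K1) `W ≤ L`, (K2) `H + k ≡ 0 (mod n)`, and
(K3) `h_{i-1} + w_i + h_i ≡ 0 (mod n)` and `0 < h_i < n` for `1 ≤ i ≤ N` (with `h_0 = n`). -/
def isKG (n L k : ℕ) (G : List (ℕ × ℕ)) : Prop :=
  (∀ p ∈ G, 0 < p.1 ∧ 0 < p.2) ∧
  Wsum G ≤ L ∧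
  (Hsum G + k) % n = 0 ∧
  ∀ i ∈ Finset.Icc 1 G.length,
    (hseq n G (i - 1) + wseq G i + hseq n G i) % n = 0 ∧
    0 < hseq n G i ∧ hseq n G i < n

/-- The set of paths in `P_L(Λ_i + Λ_j, Λ_k)`, encoded by their integer (step-label)
sequences `ι(p) = (μ_0, …, μ_L)`: a path is a sequence `(λ_0, …, λ_L)` of multisets of two
residues mod `n` with `λ_0 = {i,j}`, `λ_L = {k, i+j-k+L}`, in which `λ_{ℓ+1}` is obtained
from `λ_ℓ` by replacing the element `μ_ℓ` by `μ_ℓ + 1`.  By convention `μ_ℓ = i+j-k+L` for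
all `ℓ ≥ L` (in particular `μ_L`, the step towards `λ_{L+1} = {k, i+j-k+L+1}`). -/
def pathSet (n : ℕ) (L : ℕ) (i j k : ZMod n) : Set (ℕ → ZMod n) :=
  { mu | (∀ ℓ : ℕ, L ≤ ℓ → mu ℓ = i + j - k + (L : ZMod n)) ∧
      ∃ lam : ℕ → Multiset (ZMod n),
        lam 0 = {i, j} ∧
        lam L = {k, i + j - k + (L : ZMod n)} ∧
        ∀ ℓ : ℕ, ℓ < L →
          mu ℓ ∈ lam ℓ ∧ lam (ℓ + 1) = (mu ℓ + 1) ::ₘ (lam ℓ).erase (mu ℓ) }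

/-- The ascending list of positions `ℓ ∈ {1,…,L}` of the domain walls of the path with
step sequence `mu`: there is a domain wall of height `h` (`0 < h < n`) at `ℓ` iff
`μ_ℓ - μ_{ℓ-1} ≡ h + 1 (mod n)`, i.e. iff `μ_ℓ - μ_{ℓ-1} - 1 ≢ 0 (mod n)`. -/
def wallPositions (n L : ℕ) (mu : ℕ → ZMod n) : List ℕ :=
  (List.range (L + 1)).filter fun ℓ => decide (1 ≤ ℓ ∧ mu ℓ - mu (ℓ - 1) - 1 ≠ 0)

/-- Turn the list of wall positions `x_1 < x_2 < ⋯ < x_N` (with `prev` the previous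
position, initially `0`) into the interpolating matrix
`((x_1 - prev, h_1), (x_2 - x_1, h_2), …)`, where `h` is the wall height
`h ≡ μ_x - μ_{x-1} - 1 (mod n)`, `0 < h < n`. -/
def mkM (n : ℕ) (mu : ℕ → ZMod n) : List ℕ → ℕ → List (ℕ × ℕ)
  | [], _ => []
  | x :: xs, prev => (x - prev, (mu x - mu (x - 1) - 1).val) :: mkM n mu xs x

/-- The interpolating matrix `M(p)` of a path with step sequence `mu`. -/
def Mmat (n L : ℕ) (mu : ℕ → ZMod n) : List (ℕ × ℕ) :=
  mkM n mu (wallPositions n L mu) 0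


/-! ### Auxiliary machinery -/

namespace PGBaux

variable {n : ℕ}

/-- The "jump" of a step sequence at `x`. Walls are positions with nonzero jump. -/
def jump (mu : ℕ → ZMod n) (x : ℕ) : ZMod n := mu x - mu (x - 1) - 1

/-- The "stale" particle value. -/
def gf (mu : ℕ → ZMod n) : ℕ → ZMod n
  | 0 => 0
  | 1 => 0
  | (m+2) => if jump mu (m+1) = 0 then gf mu (m+1) else mu m + 1

/-- Canonical multiset sequence determined by the step sequence. -/
def lamOf (mu : ℕ → ZMod n) : ℕ → Multiset (ZMod n)
  | 0 => {0, 0}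
  | (m+1) => (mu m + 1) ::ₘ (lamOf mu m).erase (mu m)

/-- Recursive form of condition K3. -/
def K3P (n : ℕ) : ℕ → List (ℕ × ℕ) → Prop
  | _, [] => True
  | h0, (w,h) :: r => (h0 + w + h) % n = 0 ∧ 0 < h ∧ h < n ∧ K3P n h r

/-- Absolute positions of an interpolating matrix. -/
def toAbs : List (ℕ × ℕ) → ℕ → List (ℕ × ℕ)
  | [], _ => []
  | (w,h) :: r, prev => (prev + w, h) :: toAbs r (prev + w)

/-- Height at absolute position `x` (0 if no wall there). -/
def findH : List (ℕ × ℕ) → ℕ → ℕ → ℕ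
  | [], _, _ => 0
  | (w,h) :: r, prev, x => if prev + w = x then h else findH r (prev + w) x

/-- The step sequence reconstructed from an interpolating matrix. -/
def muOf (n L k : ℕ) (G : List (ℕ × ℕ)) : ℕ → ZMod n := fun ℓ =>
  if L ≤ ℓ then (L : ZMod n) - k
  else (ℓ : ZMod n) + ((List.range (ℓ+1)).map fun m => ((findH G 0 m : ℕ) : ZMod n)).sum

/-! #### Sum bridges -/

theorem sum_range_getD {α β : Type*} [AddCommMonoid β] (G : List α) (f : α → β) (d : α) :
    ∑ i ∈ Finset.range G.length, f (G.getD i d) = (G.map f).sum := by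
  induction G with
  | nil => simp
  | cons a G ih =>
      rw [List.length_cons, Finset.sum_range_succ' (fun i => f ((a :: G).getD i d))]
      simp only [List.getD_cons_succ, List.getD_cons_zero, ih, List.map_cons, List.sum_cons]
      exact add_comm _ _

theorem sum_Icc_getD {α β : Type*} [AddCommMonoid β] (G : List α) (f : α → β) (d : α) :
    ∑ i ∈ Finset.Icc 1 G.length, f (G.getD (i-1) d) = (G.map f).sum := by
  rw [← sum_range_getD G f d,
    show Finset.Icc 1 G.length = Finset.Ico 1 (G.length + 1) from rfl,
    Finset.sum_Ico_eq_sum_range]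
  simp

theorem Wsum_eq (G : List (ℕ × ℕ)) : Wsum G = (G.map Prod.fst).sum := by
  unfold Wsum wseq
  exact sum_Icc_getD G Prod.fst (0,0)

theorem Hsum_eq (G : List (ℕ × ℕ)) : Hsum G = (G.map Prod.snd).sum := by
  unfold Hsum
  rw [← sum_Icc_getD G Prod.snd (0,0)]
  apply Finset.sum_congr rfl
  intro i hi
  simp only [Finset.mem_Icc] at hi
  unfold hseq
  rw [if_neg (by omega)]


/-! #### Basic jump and gf lemmas -/

theorem jump_zero_iff (mu : ℕ → ZMod n) (x : ℕ) :
    jump mu x = 0 ↔ mu x = mu (x-1) + 1 := by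
  unfold jump
  rw [sub_sub, sub_eq_zero]

theorem gf_one (mu : ℕ → ZMod n) : gf mu 1 = 0 := rfl

theorem gf_succ (mu : ℕ → ZMod n) (c : ℕ) (hc : 1 ≤ c) :
    gf mu (c+1) = if jump mu c = 0 then gf mu c else mu (c-1) + 1 := by
  obtain ⟨m, rfl⟩ := Nat.exists_eq_add_of_le hc
  show gf mu (1 + m + 1) = _
  rw [show 1 + m + 1 = m + 2 by omega]
  show (if jump mu (m+1) = 0 then gf mu (m+1) else mu m + 1) = _
  rw [show 1 + m = m + 1 by omega]
  rfl

/-- gf is constant on wall-free stretches. -/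
theorem gf_stretch (mu : ℕ → ZMod n) (a : ℕ) :
    ∀ b, a + 1 ≤ b → (∀ m, a < m → m < b → jump mu m = 0) → gf mu b = gf mu (a+1) := by
  intro b
  induction b with
  | zero => intro h; omega
  | succ c ih =>
      intro hb hfree
      rcases Nat.lt_or_ge (a+1) (c+1) with hlt | hge
      · have hc : 1 ≤ c := by omega
        rw [gf_succ mu c hc, if_pos (hfree c (by omega) (by omega))]
        exact ih (by omega) (fun m h1 h2 => hfree m h1 (by omega))
      · congr 1; omega

/-- mu increments along wall-free stretches. -/
theorem mu_stretch (mu : ℕ → ZMod n) (a : ℕ) :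
    ∀ b, a ≤ b → (∀ m, a < m → m ≤ b → jump mu m = 0) → mu b = mu a + ((b - a : ℕ) : ZMod n) := by
  intro b
  induction b with
  | zero => intro h _; interval_cases a; simp
  | succ c ih =>
      intro hb hfree
      rcases Nat.lt_or_ge a (c+1) with hlt | hge
      · have h1 : mu (c+1) = mu c + 1 := by
          have := (jump_zero_iff mu (c+1)).mp (hfree (c+1) (by omega) le_rfl)
          simpa using this
        have h2 := ih (by omega) (fun m hm1 hm2 => hfree m hm1 (by omega))
        rw [h1, h2, show c + 1 - a = (c - a) + 1 by omega]
        push_cast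
        ring
      · have : a = c + 1 := by omega
        subst this; simp
  
/-- Telescoping: mu is determined by mu 0 and the jumps. -/
theorem telescope (mu : ℕ → ZMod n) :
    ∀ ℓ, mu ℓ = mu 0 + (ℓ : ZMod n) + ((List.range ℓ).map fun m => jump mu (m+1)).sum := by
  intro ℓ
  induction ℓ with
  | zero => simp
  | succ c ih =>
      rw [List.range_succ, List.map_append, List.sum_append]
      have : jump mu (c+1) = mu (c+1) - mu c - 1 := by unfold jump; simp
      push_cast
      rw [ih] at *
      simp [this]
      ring

/-! #### Wall positions -/

theorem mem_wallPositions (L : ℕ) (mu : ℕ → ZMod n) (x : ℕ) :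
    x ∈ wallPositions n L mu ↔ (1 ≤ x ∧ x ≤ L ∧ jump mu x ≠ 0) := by
  unfold wallPositions
  simp only [List.mem_filter, List.mem_range, decide_eq_true_eq]
  unfold jump
  constructor
  · rintro ⟨h1, h2, h3⟩; exact ⟨h2, by omega, h3⟩
  · rintro ⟨h1, h2, h3⟩; exact ⟨by omega, h1, h3⟩

theorem walls_chain (L : ℕ) (mu : ℕ → ZMod n) :
    List.Chain (· < ·) 0 (wallPositions n L mu) := by
  refine List.isChain_iff_pairwise.mpr ?_; rw [List.pairwise_cons]
  constructor
  · intro x hx; exact (mem_wallPositions L mu x).mp hx |>.1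
  · exact List.Pairwise.filter _ (List.pairwise_lt_range (n := L+1))

/-! #### The key identities at walls -/

/-- The value of gf at any point `x` strictly after the previous wall `p`. -/
theorem gf_val (mu : ℕ → ZMod n) (hmu0 : mu 0 = 0) (p x : ℕ)
    (hp : p = 0 ∨ (1 ≤ p ∧ jump mu p ≠ 0)) (hpx : p + 1 ≤ x)
    (hfree : ∀ m, p < m → m < x → jump mu m = 0) :
    gf mu x = mu p - (if p = 0 then 0 else jump mu p) := by
  rw [gf_stretch mu p x hpx hfree]
  rcases hp with rfl | ⟨hp1, hp2⟩
  · rw [if_pos rfl, gf_one, hmu0, sub_zero]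
  · rw [if_neg (by omega), gf_succ mu p hp1, if_neg hp2]
    unfold jump
    ring

/-- The jump at `x` in terms of `mu x` and the previous wall. -/
theorem jump_wall (mu : ℕ → ZMod n) (p x : ℕ) (hpx : p < x)
    (hfree : ∀ m, p < m → m < x → jump mu m = 0) :
    jump mu x = mu x - mu p - ((x - p : ℕ) : ZMod n) := by
  have h1 : mu (x-1) = mu p + ((x - 1 - p : ℕ) : ZMod n) :=
    mu_stretch mu p (x-1) (by omega) (fun m hm1 hm2 => hfree m hm1 (by omega))
  unfold jump
  rw [h1, show x - p = (x - 1 - p) + 1 by omega]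
  push_cast
  ring


/-! #### The multiset invariant -/

theorem INV (mu : ℕ → ZMod n) (L : ℕ) (lam : ℕ → Multiset (ZMod n)) (hmu0 : mu 0 = 0)
    (hlam0 : lam 0 = {0, 0})
    (hstep : ∀ ℓ, ℓ < L → lam (ℓ+1) = (mu ℓ + 1) ::ₘ (lam ℓ).erase (mu ℓ))
    (hd : ∀ ℓ, 1 ≤ ℓ → ℓ < L → lam ℓ = {mu (ℓ-1) + 1, gf mu ℓ} →
      mu ℓ = mu (ℓ-1) + 1 ∨ mu ℓ = gf mu ℓ) :
    ∀ ℓ, 1 ≤ ℓ → ℓ ≤ L → lam ℓ = {mu (ℓ-1) + 1, gf mu ℓ} := by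
  intro ℓ
  induction ℓ with
  | zero => omega
  | succ m ih =>
      intro _ hmL
      rcases Nat.eq_zero_or_pos m with rfl | hm
      · rw [hstep 0 (by omega), hlam0, hmu0]
        show ((0 : ZMod n) + 1) ::ₘ (((0:ZMod n) ::ₘ {0}).erase 0) = _
        rw [Multiset.erase_cons_head]
        rfl
      · have hinv := ih hm (by omega)
        have hgs := gf_succ mu m hm
        rw [hstep m (by omega), hinv]
        by_cases hj : jump mu m = 0
        · have hmu : mu m = mu (m-1) + 1 := (jump_zero_iff mu m).mp hj
          rw [hgs, if_pos hj, ← hmu, Multiset.insert_eq_cons, Multiset.erase_cons_head]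
          simp
        · rcases hd m hm (by omega) hinv with hcase | hcase
          · exact absurd ((jump_zero_iff mu m).mpr hcase) hj
          · rw [hgs, if_neg hj, hcase]
            rw [show ({mu (m-1) + 1, gf mu m} : Multiset (ZMod n))
                = gf mu m ::ₘ {mu (m-1) + 1} from Multiset.cons_swap _ _ _ ▸ rfl]
            rw [Multiset.erase_cons_head]
            simp [hcase.symm]

/-! #### mod-n bridge -/

theorem modn_iff [NeZero n] (m : ℕ) : (m % n = 0) ↔ ((m : ZMod n) = 0) := by
  rw [ZMod.natCast_eq_zero_iff]
  have := NeZero.pos n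
  omega

theorem val_cast (a : ZMod n) [NeZero n] : ((a.val : ℕ) : ZMod n) = a :=
  ZMod.natCast_rightInverse a

/-! #### K3 bridges -/

theorem hseq_cons (h0 w h : ℕ) (r : List (ℕ × ℕ)) (j : ℕ) :
    hseq h0 ((w,h) :: r) (j+1) = hseq h r j := by
  unfold hseq
  rcases Nat.eq_zero_or_pos j with rfl | hj
  · simp
  · rw [if_neg (by omega), if_neg (by omega)]
    simp only [Nat.add_sub_cancel]
    rw [show j = (j-1)+1 by omega, List.getD_cons_succ]
    simp

theorem wseq_cons (w h : ℕ) (r : List (ℕ × ℕ)) (j : ℕ) (hj : 1 ≤ j) :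
    wseq ((w,h) :: r) (j+1) = wseq r j := by
  unfold wseq
  simp only [Nat.add_sub_cancel]
  rw [show j = (j-1)+1 by omega, List.getD_cons_succ]
  simp

theorem K3_iff (G : List (ℕ × ℕ)) : ∀ (h0 : ℕ),
    ((∀ i ∈ Finset.Icc 1 G.length,
      (hseq h0 G (i - 1) + wseq G i + hseq h0 G i) % n = 0 ∧
      0 < hseq h0 G i ∧ hseq h0 G i < n) ↔ K3P n h0 G) := by
  induction G with
  | nil => intro h0; simp [K3P]
  | cons p r ih =>
      intro h0
      obtain ⟨w, h⟩ := p
      constructor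
      · intro hall
        have h1 := hall 1 (Finset.mem_Icc.mpr (by simp))
        refine ⟨?_, ?_, ?_, ?_⟩
        · have : hseq h0 ((w,h)::r) 0 = h0 := by unfold hseq; simp
          have e1 : hseq h0 ((w,h)::r) 1 = h := by
            rw [show (1:ℕ) = 0 + 1 from rfl, hseq_cons]; unfold hseq; simp
          have e2 : wseq ((w,h)::r) 1 = w := by unfold wseq; simp
          simpa [this, e1, e2] using h1.1
        · have e1 : hseq h0 ((w,h)::r) 1 = h := by
            rw [show (1:ℕ) = 0 + 1 from rfl, hseq_cons]; unfold hseq; simp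
          simpa [e1] using h1.2.1
        · have e1 : hseq h0 ((w,h)::r) 1 = h := by
            rw [show (1:ℕ) = 0 + 1 from rfl, hseq_cons]; unfold hseq; simp
          simpa [e1] using h1.2.2
        · rw [← ih h]
          intro j hj
          simp only [Finset.mem_Icc] at hj
          have hjj := hall (j+1) (by simp [Finset.mem_Icc]; omega)
          rw [show j + 1 - 1 = (j-1) + 1 by omega, hseq_cons, hseq_cons,
            wseq_cons w h r j (by omega)] at hjj
          rw [show j - 1 = j - 1 from rfl]
          exact hjj
      · rintro ⟨hk, hpos, hlt, hr⟩
        intro i hi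
        simp only [Finset.mem_Icc] at hi
        rcases Nat.eq_or_lt_of_le hi.1 with h1 | h1
        · have e0 : hseq h0 ((w,h)::r) 0 = h0 := by unfold hseq; simp
          have e1 : hseq h0 ((w,h)::r) 1 = h := by
            rw [show (1:ℕ) = 0 + 1 from rfl, hseq_cons]; unfold hseq; simp
          have e2 : wseq ((w,h)::r) 1 = w := by unfold wseq; simp
          rw [← h1]
          simpa [e0, e1, e2] using ⟨hk, hpos, hlt⟩
        · have hj : i = (i - 1) + 1 := by omega
          have := ((ih h).mpr hr) (i-1) (by simp [Finset.mem_Icc]; simp at hi; omega)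
          rw [hj, hseq_cons, wseq_cons w h r (i-1) (by omega),
            show i - 1 + 1 - 1 = (i - 1 - 1) + 1 by omega, hseq_cons]
          rw [show i - 1 - 1 = i - 1 - 1 from rfl]
          exact this

theorem isKG_iff (L k : ℕ) (G : List (ℕ × ℕ)) :
    isKG n L k G ↔ ((∀ p ∈ G, 0 < p.1 ∧ 0 < p.2) ∧ (G.map Prod.fst).sum ≤ L ∧
      (((G.map Prod.snd).sum + k) % n = 0) ∧ K3P n n G) := by
  unfold isKG
  rw [Wsum_eq, Hsum_eq, K3_iff]

/-! #### mkM structure lemmas -/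

theorem mkM_jump (mu : ℕ → ZMod n) (x : ℕ) (xs : List ℕ) (prev : ℕ) :
    mkM n mu (x :: xs) prev = (x - prev, (jump mu x).val) :: mkM n mu xs x := rfl

theorem mkM_pos (mu : ℕ → ZMod n) [NeZero n] :
    ∀ (xs : List ℕ) (prev : ℕ), List.Chain (· < ·) prev xs →
    (∀ x ∈ xs, jump mu x ≠ 0) → ∀ p ∈ mkM n mu xs prev, 0 < p.1 ∧ 0 < p.2 := by
  intro xs
  induction xs with
  | nil => intro prev _ _ p hp; simp [mkM] at hp
  | cons x t ih =>
      intro prev hchain hj p hp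
      rw [mkM_jump] at hp
      rcases List.mem_cons.mp hp with rfl | hp
      · rcases List.chain_cons.mp hchain with ⟨h1, _⟩
        constructor
        · simp; omega
        · simp only []
          have : jump mu x ≠ 0 := hj x (List.mem_cons_self)
          have := (ZMod.val_eq_zero (jump mu x)).not.mpr this
          omega
      · exact ih x (List.chain_cons.mp hchain).2 (fun y hy => hj y (List.mem_cons_of_mem x hy)) p hp

theorem mkM_fst_sum (mu : ℕ → ZMod n) :
    ∀ (xs : List ℕ) (prev : ℕ), List.Chain (· < ·) prev xs →
    ((mkM n mu xs prev).map Prod.fst).sum + prev = xs.getLastD prev := by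
  intro xs
  induction xs with
  | nil => intro prev _; simp [mkM]
  | cons x t ih =>
      intro prev hchain
      rcases List.chain_cons.mp hchain with ⟨h1, h2⟩
      rw [mkM_jump, List.map_cons, List.sum_cons, List.getLastD_cons]
      have := ih x h2
      omega

theorem mkM_snd_map (mu : ℕ → ZMod n) :
    ∀ (xs : List ℕ) (prev : ℕ),
    (mkM n mu xs prev).map Prod.snd = xs.map fun x => (jump mu x).val := by
  intro xs
  induction xs with
  | nil => intro prev; simp [mkM]
  | cons x t ih => intro prev; rw [mkM_jump]; simp [ih]

/-! #### Forward K3 -/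

theorem FWD (hn : 2 ≤ n) (mu : ℕ → ZMod n) (L : ℕ) (hmu0 : mu 0 = 0)
    (hstale : ∀ x, 1 ≤ x → x ≤ L → jump mu x ≠ 0 → mu x = gf mu x) :
    ∀ (xs : List ℕ) (prev h0 : ℕ),
      List.Chain (· < ·) prev xs →
      (∀ x, x ∈ xs ↔ (prev < x ∧ x ≤ L ∧ jump mu x ≠ 0)) →
      ((h0 : ZMod n) = if prev = 0 then 0 else jump mu prev) →
      (prev = 0 ∨ (1 ≤ prev ∧ jump mu prev ≠ 0)) →
      prev ≤ L →
      K3P n h0 (mkM n mu xs prev) := by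
  haveI : NeZero n := ⟨by omega⟩
  intro xs
  induction xs with
  | nil => intro prev h0 _ _ _ _ _; trivial
  | cons x t ih =>
      intro prev h0 hchain hiff hh0 hprev hprevL
      rcases List.chain_cons.mp hchain with ⟨hpx, hchain'⟩
      have hx := (hiff x).mp (List.mem_cons_self)
      have hfree : ∀ m, prev < m → m < x → jump mu m = 0 := by
        intro m hm1 hm2
        by_contra hm
        have : m ∈ x :: t := (hiff m).mpr ⟨hm1, by omega, hm⟩
        rcases List.mem_cons.mp this with rfl | hmem
        · omega
        · have := List.isChain_iff_pairwise.mp hchain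
          rcases List.pairwise_cons.mp this with ⟨hall, hpw⟩
          rcases List.pairwise_cons.mp hpw with ⟨hall2, _⟩
          have := hall2 m hmem
          omega
      -- the key identity
      have hjx : jump mu x = mu x - mu prev - ((x - prev : ℕ) : ZMod n) :=
        jump_wall mu prev x hpx hfree
      have hmux : mu x = gf mu x := hstale x (by omega) hx.2.1 hx.2.2
      have hgf : gf mu x = mu prev - (if prev = 0 then 0 else jump mu prev) :=
        gf_val mu hmu0 prev x hprev (by omega) hfree
      have hkey : (h0 : ZMod n) + ((x - prev : ℕ) : ZMod n) + jump mu x = 0 := by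
        rw [hjx, hmux, hgf, hh0]; ring
      rw [mkM_jump]
      refine ⟨?_, ?_, ZMod.val_lt _, ?_⟩
      · rw [modn_iff]
        push_cast
        rw [val_cast]
        exact hkey
      · have := (ZMod.val_eq_zero (jump mu x)).not.mpr hx.2.2
        omega
      · apply ih x (jump mu x).val hchain'
        · intro y
          constructor
          · intro hy
            have h3 := (hiff y).mp (List.mem_cons_of_mem x hy)
            have := List.isChain_iff_pairwise.mp hchain
            rcases List.pairwise_cons.mp this with ⟨hall, hpw⟩
            rcases List.pairwise_cons.mp hpw with ⟨hall2, _⟩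
            exact ⟨hall2 y hy, h3.2⟩
          · rintro ⟨h1, h2, h3⟩
            have : y ∈ x :: t := (hiff y).mpr ⟨by omega, h2, h3⟩
            rcases List.mem_cons.mp this with rfl | hmem
            · omega
            · exact hmem
        · rw [if_neg (by omega), val_cast]
        · right; exact ⟨by omega, hx.2.2⟩
        · exact hx.2.1


/-! #### Sum over walls equals total jump sum -/

theorem sum_filter_map (f : ℕ → ZMod n) (p : ℕ → Bool) :
    ∀ l : List ℕ, (∀ x ∈ l, ¬ p x = true → f x = 0) →
    ((l.filter p).map f).sum = (l.map f).sum := by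
  intro l
  induction l with
  | nil => intro _; simp
  | cons a t ih =>
      intro hp
      rw [List.filter_cons]
      by_cases ha : p a = true
      · rw [if_pos ha]
        simp only [List.map_cons, List.sum_cons]
        rw [ih (fun x hx h => hp x (List.mem_cons_of_mem a hx) h)]
      · rw [if_neg ha]
        simp only [List.map_cons, List.sum_cons]
        rw [ih (fun x hx h => hp x (List.mem_cons_of_mem a hx) h),
          hp a (List.mem_cons_self) ha, zero_add]

theorem walls_jump_sum (L : ℕ) (mu : ℕ → ZMod n) :
    ((wallPositions n L mu).map (jump mu)).sum
      = ((List.range L).map fun m => jump mu (m+1)).sum := by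
  unfold wallPositions
  rw [List.range_succ_eq_map, List.filter_cons]
  rw [if_neg (by simp)]
  rw [sum_filter_map (jump mu) _ ((List.range L).map Nat.succ) ?_]
  · rw [List.map_map]
    rfl
  · intro x hx hnp
    simp only [List.mem_map, List.mem_range] at hx
    obtain ⟨m, _, rfl⟩ := hx
    simp only [decide_eq_true_eq, not_and, not_not] at hnp
    have := hnp (by omega)
    exact this

theorem cast_sum_val [NeZero n] (mu : ℕ → ZMod n) :
    ∀ l : List ℕ, (((l.map fun x => (jump mu x).val).sum : ℕ) : ZMod n) = (l.map (jump mu)).sum := by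
  intro l
  induction l with
  | nil => simp
  | cons a t ih =>
      simp only [List.map_cons, List.sum_cons, Nat.cast_add, val_cast]
      rw [← ih]

/-! #### Reconstruction of walls from the matrix (injectivity) -/

theorem MREC (mu mu' : ℕ → ZMod n) [NeZero n] :
    ∀ (xs : List ℕ) (xs' : List ℕ) (prev : ℕ),
    List.Chain (· < ·) prev xs → List.Chain (· < ·) prev xs' →
    mkM n mu xs prev = mkM n mu' xs' prev →
    xs = xs' ∧ ∀ x ∈ xs, jump mu x = jump mu' x := by
  intro xs
  induction xs with
  | nil =>
      intro xs' prev _ _ heq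
      cases xs' with
      | nil => exact ⟨rfl, by simp⟩
      | cons y t' => exact absurd heq.symm (by simp [mkM])
  | cons x t ih =>
      intro xs' prev hc hc' heq
      cases xs' with
      | nil => exact absurd heq (by simp [mkM])
      | cons y t' =>
          rw [mkM_jump, mkM_jump] at heq
          have h1 := List.head_eq_of_cons_eq heq
          have h2 := List.tail_eq_of_cons_eq heq
          have hxw : x - prev = y - prev := congrArg Prod.fst h1
          have hpx : prev < x := (List.chain_cons.mp hc).1
          have hpy : prev < y := (List.chain_cons.mp hc').1
          have hxy : x = y := by omega
          subst hxy
          have hval : (jump mu x).val = (jump mu' x).val := congrArg Prod.snd h1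
          have hj : jump mu x = jump mu' x := by
            rw [← val_cast (jump mu x), ← val_cast (jump mu' x), hval]
          obtain ⟨ht, hall⟩ := ih t' x (List.chain_cons.mp hc).2 (List.chain_cons.mp hc').2 h2
          refine ⟨by rw [ht], ?_⟩
          intro z hz
          rcases List.mem_cons.mp hz with rfl | hz'
          · exact hj
          · exact hall z hz'

/-- Two strictly sorted lists with the same members are equal. -/
theorem sorted_unique :
    ∀ (l1 l2 : List ℕ), l1.Pairwise (· < ·) → l2.Pairwise (· < ·) →
    (∀ x, x ∈ l1 ↔ x ∈ l2) → l1 = l2 := by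
  intro l1
  induction l1 with
  | nil =>
      intro l2 _ _ hmem
      cases l2 with
      | nil => rfl
      | cons y t => exact absurd ((hmem y).mpr (List.mem_cons_self)) (by simp)
  | cons x t ih =>
      intro l2 h1 h2 hmem
      cases l2 with
      | nil => exact absurd ((hmem x).mp (List.mem_cons_self)) (by simp)
      | cons y t' =>
          rcases List.pairwise_cons.mp h1 with ⟨hallx, hpt⟩
          rcases List.pairwise_cons.mp h2 with ⟨hally, hpt'⟩
          have hxy : x = y := by
            rcases List.mem_cons.mp ((hmem x).mp (List.mem_cons_self)) with h | h
            · exact h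
            · rcases List.mem_cons.mp ((hmem y).mpr (List.mem_cons_self)) with h' | h'
              · omega
              · have := hallx y h'
                have := hally x h
                omega
          subst hxy
          have : t = t' := by
            apply ih t' hpt hpt'
            intro z
            constructor
            · intro hz
              rcases List.mem_cons.mp ((hmem z).mp (List.mem_cons_of_mem x hz)) with rfl | h
              · exact absurd (hallx z hz) (lt_irrefl z)
              · exact h
            · intro hz
              rcases List.mem_cons.mp ((hmem z).mpr (List.mem_cons_of_mem x hz)) with rfl | h
              · exact absurd (hally z hz) (lt_irrefl z)
              · exact h
          rw [this]


/-! #### toAbs / findH lemmas -/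

theorem toAbs_mem_gt : ∀ (G : List (ℕ × ℕ)) (prev : ℕ), (∀ p ∈ G, 0 < p.1) →
    ∀ q ∈ toAbs G prev, prev < q.1 := by
  intro G
  induction G with
  | nil => intro prev _ q hq; simp [toAbs] at hq
  | cons p r ih =>
      intro prev hpos q hq
      obtain ⟨w, h⟩ := p
      rcases List.mem_cons.mp hq with rfl | hq'
      · have := hpos (w,h) (List.mem_cons_self)
        simp only []
        omega
      · have := ih (prev + w) (fun p hp => hpos p (List.mem_cons_of_mem _ hp)) q hq'
        omega

theorem toAbs_mem_le : ∀ (G : List (ℕ × ℕ)) (prev : ℕ),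
    ∀ q ∈ toAbs G prev, q.1 ≤ prev + (G.map Prod.fst).sum := by
  intro G
  induction G with
  | nil => intro prev q hq; simp [toAbs] at hq
  | cons p r ih =>
      intro prev q hq
      obtain ⟨w, h⟩ := p
      rcases List.mem_cons.mp hq with rfl | hq'
      · simp only [List.map_cons, List.sum_cons]; omega
      · have := ih (prev + w) q hq'
        simp only [List.map_cons, List.sum_cons]
        omega

theorem toAbs_map_snd : ∀ (G : List (ℕ × ℕ)) (prev : ℕ),
    (toAbs G prev).map Prod.snd = G.map Prod.snd := by
  intro G
  induction G with
  | nil => intro prev; rfl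
  | cons p r ih => obtain ⟨w, h⟩ := p; intro prev; simp [toAbs, ih]

theorem findH_eq_zero_of_le : ∀ (G : List (ℕ × ℕ)) (prev x : ℕ), (∀ p ∈ G, 0 < p.1) →
    x ≤ prev → findH G prev x = 0 := by
  intro G
  induction G with
  | nil => intro prev x _ _; rfl
  | cons p r ih =>
      intro prev x hpos hx
      obtain ⟨w, h⟩ := p
      have hw := hpos (w,h) (List.mem_cons_self)
      show (if prev + w = x then h else findH r (prev + w) x) = 0
      rw [if_neg (by simp at hw; omega)]
      exact ih (prev + w) x (fun p hp => hpos p (List.mem_cons_of_mem _ hp)) (by omega)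

theorem findH_at : ∀ (G : List (ℕ × ℕ)) (prev : ℕ), (∀ p ∈ G, 0 < p.1) →
    ∀ x h, (x, h) ∈ toAbs G prev → findH G prev x = h := by
  intro G
  induction G with
  | nil => intro prev _ x h hq; simp [toAbs] at hq
  | cons p r ih =>
      intro prev hpos x h hq
      obtain ⟨w, h'⟩ := p
      show (if prev + w = x then h' else findH r (prev + w) x) = h
      rcases List.mem_cons.mp hq with heq | hq'
      · injection heq with e1 e2
        rw [if_pos e1.symm]; exact e2.symm
      · have hgt := toAbs_mem_gt r (prev + w)
          (fun p hp => hpos p (List.mem_cons_of_mem _ hp)) (x, h) hq'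
        rw [if_neg (by simp at hgt ⊢; omega)]
        exact ih (prev + w) (fun p hp => hpos p (List.mem_cons_of_mem _ hp)) x h hq'

theorem findH_off : ∀ (G : List (ℕ × ℕ)) (prev x : ℕ),
    x ∉ (toAbs G prev).map Prod.fst → findH G prev x = 0 := by
  intro G
  induction G with
  | nil => intro prev x _; rfl
  | cons p r ih =>
      intro prev x hx
      obtain ⟨w, h⟩ := p
      simp only [toAbs, List.map_cons, List.mem_cons, not_or] at hx
      show (if prev + w = x then h else findH r (prev + w) x) = 0
      rw [if_neg (fun hc => hx.1 hc.symm)]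
      exact ih (prev + w) x hx.2

theorem toAbs_chain : ∀ (G : List (ℕ × ℕ)) (prev : ℕ), (∀ p ∈ G, 0 < p.1) →
    List.Chain (· < ·) prev ((toAbs G prev).map Prod.fst) := by
  intro G
  induction G with
  | nil => intro prev _; simp [toAbs]; exact List.Chain.nil
  | cons p r ih =>
      intro prev hpos
      obtain ⟨w, h⟩ := p
      simp only [toAbs, List.map_cons]
      refine List.chain_cons.mpr ?_
      constructor
      · have := hpos (w,h) (List.mem_cons_self); simp at this; omega
      · exact ih (prev + w) (fun p hp => hpos p (List.mem_cons_of_mem _ hp))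

theorem listsum_range (f : ℕ → ZMod n) (N : ℕ) :
    ((List.range N).map f).sum = ∑ i ∈ Finset.range N, f i := by
  induction N with
  | zero => simp
  | succ m ih => rw [List.range_succ, Finset.sum_range_succ]; simp [ih]

theorem sum_findH : ∀ (G : List (ℕ × ℕ)) (prev M : ℕ), (∀ p ∈ G, 0 < p.1) →
    prev + (G.map Prod.fst).sum ≤ M →
    ((List.range (M+1)).map fun m => ((findH G prev m : ℕ) : ZMod n)).sum
      = (((G.map Prod.snd).sum : ℕ) : ZMod n) := by
  intro G
  induction G with
  | nil =>
      intro prev M _ _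
      simp [findH]
  | cons p r ih =>
      intro prev M hpos hM
      obtain ⟨w, h⟩ := p
      have hpos' : ∀ p ∈ r, 0 < p.1 := fun p hp => hpos p (List.mem_cons_of_mem _ hp)
      have key : ∀ m : ℕ, ((findH ((w,h)::r) prev m : ℕ) : ZMod n)
          = (if prev + w = m then (h : ZMod n) else 0) + ((findH r (prev + w) m : ℕ) : ZMod n) := by
        intro m
        show (((if prev + w = m then h else findH r (prev + w) m) : ℕ) : ZMod n) = _
        by_cases hc : prev + w = m
        · rw [if_pos hc, if_pos hc, findH_eq_zero_of_le r (prev+w) m hpos' (by omega)]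
          simp
        · rw [if_neg hc, if_neg hc, zero_add]
      rw [listsum_range]
      simp only [key]
      rw [Finset.sum_add_distrib]
      rw [← listsum_range (fun m => ((findH r (prev + w) m : ℕ) : ZMod n)) (M+1)]
      rw [ih (prev + w) M hpos' (by simp only [List.map_cons, List.sum_cons] at hM ⊢; omega)]
      rw [Finset.sum_ite_eq (Finset.range (M+1)) (prev+w) (fun _ => (h : ZMod n))]
      rw [if_pos (Finset.mem_range.mpr (by simp only [List.map_cons, List.sum_cons] at hM; omega))]
      simp only [List.map_cons, List.sum_cons]
      push_cast
      ring

/-! #### muOf lemmas -/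

theorem muOf_tail (L k : ℕ) (G : List (ℕ × ℕ)) (ℓ : ℕ) (hl : L ≤ ℓ) :
    muOf n L k G ℓ = (L : ZMod n) - k := by
  unfold muOf; rw [if_pos hl]

theorem muOf_eq [NeZero n] (L k : ℕ) (G : List (ℕ × ℕ))
    (hpos : ∀ p ∈ G, 0 < p.1) (hW : (G.map Prod.fst).sum ≤ L)
    (hK2 : (((G.map Prod.snd).sum + k) % n = 0)) :
    ∀ ℓ, ℓ ≤ L → muOf n L k G ℓ
      = (ℓ : ZMod n) + ((List.range (ℓ+1)).map fun m => ((findH G 0 m : ℕ) : ZMod n)).sum := by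
  intro ℓ hℓ
  rcases Nat.eq_or_lt_of_le hℓ with rfl | hlt
  · unfold muOf
    rw [if_pos le_rfl, sum_findH G 0 ℓ hpos (by omega)]
    have h2 : (((G.map Prod.snd).sum + k : ℕ) : ZMod n) = 0 := (modn_iff _).mp hK2
    rw [Nat.cast_add] at h2
    have : (((G.map Prod.snd).sum : ℕ) : ZMod n) = -(k : ZMod n) := by linear_combination h2
    rw [this]
    ring
  · unfold muOf
    rw [if_neg (by omega)]

theorem muOf_zero [NeZero n] (L k : ℕ) (G : List (ℕ × ℕ))
    (hpos : ∀ p ∈ G, 0 < p.1) (hW : (G.map Prod.fst).sum ≤ L)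
    (hK2 : (((G.map Prod.snd).sum + k) % n = 0)) (hL : 1 ≤ L) :
    muOf n L k G 0 = 0 := by
  rw [muOf_eq L k G hpos hW hK2 0 (by omega)]
  simp [List.range_succ, findH_eq_zero_of_le G 0 0 hpos le_rfl]

theorem muOf_jump [NeZero n] (L k : ℕ) (G : List (ℕ × ℕ))
    (hpos : ∀ p ∈ G, 0 < p.1) (hW : (G.map Prod.fst).sum ≤ L)
    (hK2 : (((G.map Prod.snd).sum + k) % n = 0)) :
    ∀ ℓ, 1 ≤ ℓ → ℓ ≤ L → jump (muOf n L k G) ℓ = ((findH G 0 ℓ : ℕ) : ZMod n) := by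
  intro ℓ h1 h2
  unfold jump
  rw [muOf_eq L k G hpos hW hK2 ℓ h2, muOf_eq L k G hpos hW hK2 (ℓ-1) (by omega)]
  rw [show ℓ - 1 + 1 = ℓ by omega]
  rw [show ℓ + 1 = ℓ + 1 from rfl, List.range_succ, List.map_append, List.sum_append]
  have hc : (ℓ : ZMod n) = ((ℓ - 1 : ℕ) : ZMod n) + 1 := by
    rw [show ℓ = (ℓ - 1) + 1 by omega]
    push_cast
    ring
  rw [hc]
  simp
  ring


/-! #### More structure lemmas -/

theorem K3P_heights : ∀ (G : List (ℕ × ℕ)) (h0 : ℕ), K3P n h0 G →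
    ∀ p ∈ G, 0 < p.2 ∧ p.2 < n := by
  intro G
  induction G with
  | nil => intro h0 _ p hp; simp at hp
  | cons q r ih =>
      intro h0 hk p hp
      obtain ⟨w, h⟩ := q
      obtain ⟨_, hpos, hlt, hr⟩ := hk
      rcases List.mem_cons.mp hp with rfl | hp'
      · exact ⟨hpos, hlt⟩
      · exact ih h hr p hp'

theorem getLastD_mem {α : Type*} : ∀ (l : List α) (d : α), l.getLastD d ∈ l ∨ l.getLastD d = d := by
  intro l
  induction l with
  | nil => intro d; right; rfl
  | cons a t ih =>
      intro d
      rw [List.getLastD_cons]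
      rcases ih a with h | h
      · left; exact List.mem_cons_of_mem a h
      · left; rw [h]; exact List.mem_cons_self

theorem toAbs_last : ∀ (G : List (ℕ × ℕ)) (prev : ℕ), G ≠ [] →
    ∃ q ∈ toAbs G prev, q.1 = prev + (G.map Prod.fst).sum ∧ q.2 = (G.getLastD (0,0)).2 := by
  intro G
  induction G with
  | nil => intro prev h; exact absurd rfl h
  | cons p r ih =>
      intro prev _
      obtain ⟨w, h⟩ := p
      rcases List.eq_nil_or_concat r with rfl | hne
      · refine ⟨(prev + w, h), List.mem_cons_self, ?_, ?_⟩
        · simp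
        · rfl
      · have hr : r ≠ [] := by rcases hne with ⟨l, a, rfl⟩; simp
        obtain ⟨q, hq, hq1, hq2⟩ := ih (prev + w) hr
        refine ⟨q, List.mem_cons_of_mem _ hq, ?_, ?_⟩
        · rw [hq1]; simp only [List.map_cons, List.sum_cons]; omega
        · rw [hq2, List.getLastD_cons]
          cases r with
          | nil => exact absurd rfl hr
          | cons b t => rw [List.getLastD_cons, List.getLastD_cons]

/-- Telescoped K3 identity. -/
theorem TK3 (hn : 2 ≤ n) : ∀ (G : List (ℕ × ℕ)) (h0 : ℕ), G ≠ [] → K3P n h0 G →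
    ((h0 : ZMod n) + (((G.map Prod.fst).sum : ℕ) : ZMod n)
      + 2 * (((G.map Prod.snd).sum : ℕ) : ZMod n)) = (((G.getLastD (0,0)).2 : ℕ) : ZMod n) := by
  haveI : NeZero n := ⟨by omega⟩
  intro G
  induction G with
  | nil => intro h0 h _; exact absurd rfl h
  | cons p r ih =>
      intro h0 _ hk
      obtain ⟨w, h⟩ := p
      obtain ⟨hmod, hpos, hlt, hr⟩ := hk
      have hcast : (h0 : ZMod n) + (w : ZMod n) + (h : ZMod n) = 0 := by
        have := (modn_iff (h0 + w + h)).mp hmod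
        push_cast at this
        exact this
      rcases List.eq_nil_or_concat r with rfl | hne
      · show (h0 : ZMod n) + (((w + 0 : ℕ) : ℕ) : ZMod n) + 2 * (((h + 0 : ℕ) : ℕ) : ZMod n) = _
        push_cast
        show _ = ((h:ℕ) : ZMod n)
        linear_combination hcast
      · have hr' : r ≠ [] := by rcases hne with ⟨l, a, rfl⟩; simp
        have := ih h hr' hr
        rw [List.getLastD_cons]
        have hgl : r.getLastD (w, h) = r.getLastD (0,0) := by
          cases r with
          | nil => exact absurd rfl hr'
          | cons b t => rw [List.getLastD_cons, List.getLastD_cons]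
        rw [hgl]
        rw [← this]
        simp only [List.map_cons, List.sum_cons]
        push_cast
        linear_combination hcast

/-- Backward: walls go to the stale value, given K3. -/
theorem BWD (hn : 2 ≤ n) (mu : ℕ → ZMod n) (L : ℕ) (hmu0 : mu 0 = 0) :
    ∀ (xs : List ℕ) (prev h0 : ℕ),
      List.Chain (· < ·) prev xs →
      (∀ x, x ∈ xs ↔ (prev < x ∧ x ≤ L ∧ jump mu x ≠ 0)) →
      ((h0 : ZMod n) = if prev = 0 then 0 else jump mu prev) →
      (prev = 0 ∨ (1 ≤ prev ∧ jump mu prev ≠ 0)) →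
      prev ≤ L →
      K3P n h0 (mkM n mu xs prev) →
      ∀ x ∈ xs, mu x = gf mu x := by
  haveI : NeZero n := ⟨by omega⟩
  intro xs
  induction xs with
  | nil => intro prev h0 _ _ _ _ _ _ x hx; simp at hx
  | cons x t ih =>
      intro prev h0 hchain hiff hh0 hprev hprevL hk3
      rcases List.chain_cons.mp hchain with ⟨hpx, hchain'⟩
      have hx := (hiff x).mp (List.mem_cons_self)
      have hfree : ∀ m, prev < m → m < x → jump mu m = 0 := by
        intro m hm1 hm2
        by_contra hm
        have : m ∈ x :: t := (hiff m).mpr ⟨hm1, by omega, hm⟩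
        rcases List.mem_cons.mp this with rfl | hmem
        · omega
        · have := List.isChain_iff_pairwise.mp hchain
          rcases List.pairwise_cons.mp this with ⟨_, hpw⟩
          rcases List.pairwise_cons.mp hpw with ⟨hall2, _⟩
          have := hall2 m hmem
          omega
      rw [mkM_jump] at hk3
      obtain ⟨hmod, _, _, hk3'⟩ := hk3
      have hkey : (h0 : ZMod n) + ((x - prev : ℕ) : ZMod n) + jump mu x = 0 := by
        have := (modn_iff _).mp hmod
        push_cast at this
        rw [val_cast] at this
        exact this
      have hjx : jump mu x = mu x - mu prev - ((x - prev : ℕ) : ZMod n) :=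
        jump_wall mu prev x hpx hfree
      have hgf : gf mu x = mu prev - (if prev = 0 then 0 else jump mu prev) :=
        gf_val mu hmu0 prev x hprev (by omega) hfree
      have hstx : mu x = gf mu x := by
        rw [hgf, ← hh0]
        rw [hjx] at hkey
        linear_combination hkey
      have hiff' : ∀ y, y ∈ t ↔ (x < y ∧ y ≤ L ∧ jump mu y ≠ 0) := by
        intro y
        constructor
        · intro hy
          have h3 := (hiff y).mp (List.mem_cons_of_mem x hy)
          have := List.isChain_iff_pairwise.mp hchain
          rcases List.pairwise_cons.mp this with ⟨_, hpw⟩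
          rcases List.pairwise_cons.mp hpw with ⟨hall2, _⟩
          exact ⟨hall2 y hy, h3.2⟩
        · rintro ⟨h1, h2, h3⟩
          have : y ∈ x :: t := (hiff y).mpr ⟨by omega, h2, h3⟩
          rcases List.mem_cons.mp this with rfl | hmem
          · omega
          · exact hmem
      intro z hz
      rcases List.mem_cons.mp hz with rfl | hz'
      · exact hstx
      · exact ih x (jump mu x).val hchain' hiff'
          (by rw [if_neg (by omega), val_cast]) (Or.inr ⟨by omega, hx.2.2⟩) hx.2.1 hk3' z hz'

/-- Walls of the reconstructed path are exactly the matrix positions. -/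
theorem walls_muOf (hn : 2 ≤ n) (L k : ℕ) (G : List (ℕ × ℕ))
    (hpos : ∀ p ∈ G, 0 < p.1 ∧ 0 < p.2) (hW : (G.map Prod.fst).sum ≤ L)
    (hK2 : (((G.map Prod.snd).sum + k) % n = 0)) (hK3 : K3P n n G) :
    wallPositions n L (muOf n L k G) = (toAbs G 0).map Prod.fst := by
  haveI : NeZero n := ⟨by omega⟩
  have hpos1 : ∀ p ∈ G, 0 < p.1 := fun p hp => (hpos p hp).1
  apply sorted_unique
  · exact List.Pairwise.filter _ (List.pairwise_lt_range (n := L+1))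
  · have := toAbs_chain G 0 hpos1
    exact (List.pairwise_cons.mp (List.isChain_iff_pairwise.mp this)).2
  · intro x
    rw [mem_wallPositions]
    constructor
    · rintro ⟨h1, h2, h3⟩
      rw [muOf_jump L k G hpos1 hW hK2 x h1 h2] at h3
      by_contra hnx
      rw [findH_off G 0 x hnx] at h3
      simp at h3
    · intro hx
      obtain ⟨q, hq, hq1⟩ := List.mem_map.mp hx
      have h1 : 1 ≤ x := by have := toAbs_mem_gt G 0 hpos1 q hq; omega
      have h2 : x ≤ L := by have := toAbs_mem_le G 0 q hq; omega
      refine ⟨h1, h2, ?_⟩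
      rw [muOf_jump L k G hpos1 hW hK2 x h1 h2]
      have he : findH G 0 x = q.2 := by
        have : (x, q.2) ∈ toAbs G 0 := by
          rw [← hq1]
          exact hq
        exact findH_at G 0 hpos1 x q.2 this
      rw [he]
      have hq2 : 0 < q.2 ∧ q.2 < n := by
        have : q.2 ∈ G.map Prod.snd := by
          rw [← toAbs_map_snd G 0]
          exact List.mem_map_of_mem (f := Prod.snd) hq
        obtain ⟨p, hp, hp2⟩ := List.mem_map.mp this
        rw [← hp2]
        exact K3P_heights G n hK3 p hp
      intro hzero
      have := ZMod.val_cast_of_lt hq2.2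
      rw [hzero] at this
      simp at this
      omega

/-- mkM over the matrix positions reconstructs the matrix. -/
theorem mkM_toAbs (mu : ℕ → ZMod n) [NeZero n] :
    ∀ (G : List (ℕ × ℕ)) (prev : ℕ),
      (∀ q ∈ toAbs G prev, jump mu q.1 = ((q.2 : ℕ) : ZMod n) ∧ q.2 < n) →
      mkM n mu ((toAbs G prev).map Prod.fst) prev = G := by
  intro G
  induction G with
  | nil => intro prev _; rfl
  | cons p r ih =>
      intro prev hj
      obtain ⟨w, h⟩ := p
      show mkM n mu ((prev + w) :: (toAbs r (prev+w)).map Prod.fst) prev = _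
      rw [mkM_jump]
      have hq := hj (prev + w, h) (List.mem_cons_self)
      congr 1
      · have : jump mu (prev + w) = ((h:ℕ) : ZMod n) := hq.1
        rw [this, ZMod.val_cast_of_lt hq.2]
        simp
      · exact ih (prev + w) (fun q hqq => hj q (List.mem_cons_of_mem _ hqq))


/-! #### Forward direction -/

theorem walls_L0 (mu : ℕ → ZMod n) : wallPositions n 0 mu = [] := by
  unfold wallPositions
  rw [show (0:ℕ)+1 = 1 from rfl, show List.range 1 = [0] from rfl]
  simp

theorem forward (hn : 2 ≤ n) (L k : ℕ) (mu : ℕ → ZMod n)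
    (hmu : mu ∈ pathSet n L 0 0 (k : ZMod n)) : isKG n L k (Mmat n L mu) := by
  haveI : NeZero n := ⟨by omega⟩
  obtain ⟨htail, lam, hlam0, hlamL, hsteps⟩ := hmu
  rw [isKG_iff]
  rcases Nat.eq_zero_or_pos L with rfl | hL
  · have hk0 : (k : ZMod n) = 0 := by
      have hpair : ({(↑k : ZMod n), 0 + 0 - ↑k + ((0:ℕ) : ZMod n)} : Multiset (ZMod n))
          = {0, 0} := hlamL.symm.trans hlam0
      have : (↑k : ZMod n) ∈ ({(0 : ZMod n), 0} : Multiset (ZMod n)) := by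
        rw [← hpair]; exact Multiset.mem_cons_self _ _
      rcases Multiset.mem_cons.mp this with h | h
      · exact h
      · exact Multiset.mem_singleton.mp h
    unfold Mmat
    rw [walls_L0 mu]
    refine ⟨by intro p hp; simp [mkM] at hp, by simp [mkM], ?_, trivial⟩
    show ((((mkM n mu [] 0).map Prod.snd).sum + k) % n = 0)
    rw [show mkM n mu [] 0 = [] from rfl]
    simp only [List.map_nil, List.sum_nil, zero_add]
    exact (modn_iff k).mpr hk0
  · -- L ≥ 1
    have hmu0 : mu 0 = 0 := by
      have := (hsteps 0 (by omega)).1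
      rw [hlam0] at this
      rcases Multiset.mem_cons.mp this with h | h
      · exact h
      · exact Multiset.mem_singleton.mp h
    have hd : ∀ ℓ, 1 ≤ ℓ → ℓ < L → lam ℓ = {mu (ℓ-1) + 1, gf mu ℓ} →
        mu ℓ = mu (ℓ-1) + 1 ∨ mu ℓ = gf mu ℓ := by
      intro ℓ h1 h2 hpair
      have := (hsteps ℓ h2).1
      rw [hpair] at this
      rcases Multiset.mem_cons.mp this with h | h
      · exact Or.inl h
      · exact Or.inr (Multiset.mem_singleton.mp h)
    have hinv := INV mu L lam hmu0 hlam0 (fun ℓ hℓ => (hsteps ℓ hℓ).2) hd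
    have hstale : ∀ x, 1 ≤ x → x ≤ L → jump mu x ≠ 0 → mu x = gf mu x := by
      intro x h1 h2 hj
      have hne : mu x ≠ mu (x-1) + 1 := fun hc => hj ((jump_zero_iff mu x).mpr hc)
      have hpairx := hinv x h1 h2
      rcases Nat.eq_or_lt_of_le h2 with heq | hlt
      · have hmuL : mu x = 0 + 0 - ↑k + (L : ZMod n) := htail x (le_of_eq heq.symm)
        have hmem : mu x ∈ lam x := by
          rw [hmuL, heq, hlamL]
          exact Multiset.mem_cons_of_mem (Multiset.mem_singleton_self _)
        rw [hpairx] at hmem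
        rcases Multiset.mem_cons.mp hmem with h | h
        · exact absurd h hne
        · exact Multiset.mem_singleton.mp h
      · have hmem := (hsteps x hlt).1
        rw [hpairx] at hmem
        rcases Multiset.mem_cons.mp hmem with h | h
        · exact absurd h hne
        · exact Multiset.mem_singleton.mp h
    refine ⟨?_, ?_, ?_, ?_⟩
    · exact mkM_pos mu (wallPositions n L mu) 0 (walls_chain L mu)
        (fun x hx => ((mem_wallPositions L mu x).mp hx).2.2)
    · have hsum := mkM_fst_sum mu (wallPositions n L mu) 0 (walls_chain L mu)
      rcases getLastD_mem (wallPositions n L mu) 0 with h | h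
      · have hle := ((mem_wallPositions L mu _).mp h).2.1
        unfold Mmat
        omega
      · unfold Mmat
        omega
    · have hS : ((List.range L).map fun m => jump mu (m+1)).sum = - (k : ZMod n) := by
        have ht := telescope mu L
        rw [hmu0, htail L le_rfl] at ht
        linear_combination -ht
      show ((((Mmat n L mu).map Prod.snd).sum + k) % n = 0)
      rw [modn_iff, Nat.cast_add]
      unfold Mmat
      rw [mkM_snd_map mu _ 0, cast_sum_val mu, walls_jump_sum L mu, hS]
      ring
    · unfold Mmat
      apply FWD hn mu L hmu0 hstale (wallPositions n L mu) 0 n (walls_chain L mu)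
      · intro x
        rw [mem_wallPositions]
        constructor
        · rintro ⟨a, b, c⟩; exact ⟨by omega, b, c⟩
        · rintro ⟨a, b, c⟩; exact ⟨by omega, b, c⟩
      · rw [if_pos rfl]; exact ZMod.natCast_self n
      · exact Or.inl rfl
      · omega


/-! #### Backward direction -/

theorem getLastD_mem' {α : Type*} : ∀ (l : List α) (d : α), l ≠ [] → l.getLastD d ∈ l := by
  intro l
  induction l with
  | nil => intro d h; exact absurd rfl h
  | cons a t ih =>
      intro d _
      rw [List.getLastD_cons]
      rcases eq_or_ne t [] with rfl | hne
      · exact List.mem_cons_self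
      · exact List.mem_cons_of_mem a (ih a hne)

theorem backward (hn : 2 ≤ n) (L k : ℕ) (hL : 1 ≤ L) (G : List (ℕ × ℕ))
    (hpos : ∀ p ∈ G, 0 < p.1 ∧ 0 < p.2) (hW : (G.map Prod.fst).sum ≤ L)
    (hK2 : (((G.map Prod.snd).sum + k) % n = 0)) (hK3 : K3P n n G) :
    (muOf n L k G) ∈ pathSet n L 0 0 (k : ZMod n) ∧ Mmat n L (muOf n L k G) = G := by
  haveI : NeZero n := ⟨by omega⟩
  have hpos1 : ∀ p ∈ G, 0 < p.1 := fun p hp => (hpos p hp).1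
  set mu := muOf n L k G with hmu
  have hmu0 : mu 0 = 0 := muOf_zero L k G hpos1 hW hK2 hL
  have hHcast : (((G.map Prod.snd).sum : ℕ) : ZMod n) = -(k : ZMod n) := by
    have h2 := (modn_iff _).mp hK2
    rw [Nat.cast_add] at h2
    linear_combination h2
  have hmuL : mu L = (L : ZMod n) - ↑k := muOf_tail L k G L le_rfl
  have hwalls : wallPositions n L mu = (toAbs G 0).map Prod.fst :=
    walls_muOf hn L k G hpos hW hK2 hK3
  have hmkM : Mmat n L mu = G := by
    unfold Mmat
    rw [hwalls]
    apply mkM_toAbs mu G 0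
    intro q hq
    have h1 : 1 ≤ q.1 := toAbs_mem_gt G 0 hpos1 q hq
    have h2 : q.1 ≤ L := by have := toAbs_mem_le G 0 q hq; omega
    have hbd : 0 < q.2 ∧ q.2 < n := by
      have : q.2 ∈ G.map Prod.snd := by
        rw [← toAbs_map_snd G 0]
        exact List.mem_map_of_mem (f := Prod.snd) hq
      obtain ⟨p, hp, hp2⟩ := List.mem_map.mp this
      rw [← hp2]
      exact K3P_heights G n hK3 p hp
    refine ⟨?_, hbd.2⟩
    rw [muOf_jump L k G hpos1 hW hK2 q.1 h1 h2]
    congr 1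
    exact findH_at G 0 hpos1 q.1 q.2 hq
  have hstale : ∀ x ∈ wallPositions n L mu, mu x = gf mu x := by
    apply BWD hn mu L hmu0 (wallPositions n L mu) 0 n (walls_chain L mu)
    · intro x
      rw [mem_wallPositions]
      constructor
      · rintro ⟨a, b, c⟩; exact ⟨by omega, b, c⟩
      · rintro ⟨a, b, c⟩; exact ⟨by omega, b, c⟩
    · rw [if_pos rfl]; exact ZMod.natCast_self n
    · exact Or.inl rfl
    · omega
    · show K3P n n (Mmat n L mu)
      rw [hmkM]
      exact hK3
  have htail : ∀ ℓ, L ≤ ℓ → mu ℓ = 0 + 0 - ↑k + (L : ZMod n) := by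
    intro ℓ hℓ
    rw [hmu, muOf_tail L k G ℓ hℓ]
    ring
  have hd : ∀ ℓ, 1 ≤ ℓ → ℓ < L → lamOf mu ℓ = {mu (ℓ-1) + 1, gf mu ℓ} →
      mu ℓ = mu (ℓ-1) + 1 ∨ mu ℓ = gf mu ℓ := by
    intro ℓ h1 h2 _
    by_cases hj : jump mu ℓ = 0
    · exact Or.inl ((jump_zero_iff mu ℓ).mp hj)
    · exact Or.inr (hstale ℓ ((mem_wallPositions L mu ℓ).mpr ⟨h1, by omega, hj⟩))
  have hinv := INV mu L (lamOf mu) hmu0 rfl (fun ℓ _ => rfl) hd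
  have hmem : ∀ ℓ, ℓ < L → mu ℓ ∈ lamOf mu ℓ := by
    intro ℓ hℓ
    rcases Nat.eq_zero_or_pos ℓ with rfl | h1
    · rw [hmu0]
      show (0:ZMod n) ∈ ({0, 0} : Multiset (ZMod n))
      exact Multiset.mem_cons_self _ _
    · rw [hinv ℓ h1 (by omega)]
      by_cases hj : jump mu ℓ = 0
      · rw [(jump_zero_iff mu ℓ).mp hj]
        exact Multiset.mem_cons_self _ _
      · rw [hstale ℓ ((mem_wallPositions L mu ℓ).mpr ⟨h1, by omega, hj⟩)]
        exact Multiset.mem_cons_of_mem (Multiset.mem_singleton_self _)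
  -- the endpoint
  have hlamL : lamOf mu L = {(↑k : ZMod n), 0 + 0 - ↑k + (L : ZMod n)} := by
    have e2 : (0:ZMod n) + 0 - ↑k + ↑L = ↑L - ↑k := by ring
    rw [e2, hinv L hL le_rfl]
    rcases eq_or_ne G [] with rfl | hne
    · have hk0 : (↑k : ZMod n) = 0 := by
        simp only [List.map_nil, List.sum_nil, Nat.cast_zero] at hHcast
        linear_combination hHcast
      have hfree : ∀ m, 0 < m → m ≤ L → jump mu m = 0 := by
        intro m hm1 hm2
        rw [hmu, muOf_jump L k [] hpos1 hW hK2 m (by omega) hm2]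
        show ((findH [] 0 m : ℕ) : ZMod n) = 0
        simp [findH]
      have emu : mu (L-1) + 1 = mu L := ((jump_zero_iff mu L).mp (hfree L hL le_rfl)).symm
      have egf : gf mu L = 0 := by
        have := gf_val mu hmu0 0 L (Or.inl rfl) (by omega)
          (fun m a b => hfree m a (by omega))
        rw [if_pos rfl, hmu0, sub_zero] at this
        exact this
      rw [egf, emu, hmuL, hk0, Multiset.pair_comm]
    · obtain ⟨q, hq, hq1, hq2⟩ := toAbs_last G 0 hne
      have hq1' : q.1 = (G.map Prod.fst).sum := by omega
      have hqQ : q = ((G.map Prod.fst).sum, (G.getLastD (0,0)).2) := by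
        rw [← hq1', ← hq2]
      rw [hqQ] at hq
      have hQ1 : 1 ≤ (G.map Prod.fst).sum := by
        have := toAbs_mem_gt G 0 hpos1 _ hq
        exact this
      have hQL : (G.map Prod.fst).sum ≤ L := hW
      have hjQ : jump mu (G.map Prod.fst).sum = (((G.getLastD (0,0)).2 : ℕ) : ZMod n) := by
        rw [hmu, muOf_jump L k G hpos1 hW hK2 _ hQ1 hQL]
        congr 1
        exact findH_at G 0 hpos1 _ _ hq
      have hNbd : 0 < (G.getLastD (0,0)).2 ∧ (G.getLastD (0,0)).2 < n :=
        K3P_heights G n hK3 _ (getLastD_mem' G (0,0) hne)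
      have hjQne : jump mu (G.map Prod.fst).sum ≠ 0 := by
        rw [hjQ]
        intro hzero
        have hv := ZMod.val_cast_of_lt hNbd.2
        rw [hzero, ZMod.val_zero] at hv
        omega
      have hTK3 := TK3 hn G n hne hK3
      rw [ZMod.natCast_self, hHcast] at hTK3
      rcases Nat.eq_or_lt_of_le hQL with heQ | hQlt
      · -- last wall is at L
        have hjLne : jump mu L ≠ 0 := by rw [← heQ]; exact hjQne
        have hstaleL : mu L = gf mu L :=
          hstale L ((mem_wallPositions L mu L).mpr ⟨hL, le_rfl, hjLne⟩)
        have emu : mu (L-1) + 1 = mu L - jump mu L := by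
          unfold jump
          ring
        have ekey : mu L - jump mu L = ↑k := by
          rw [hmuL, ← heQ, hjQ]
          linear_combination hTK3
        rw [emu, ekey, ← hstaleL, hmuL]
      · -- last wall before L
        have hoffL : ∀ m, (G.map Prod.fst).sum < m → m ≤ L → jump mu m = 0 := by
          intro m hm1 hm2
          rw [hmu, muOf_jump L k G hpos1 hW hK2 m (by omega) hm2, findH_off G 0 m ?_]
          · simp
          · intro hmm
            obtain ⟨q', hq', hq'1⟩ := List.mem_map.mp hmm
            have := toAbs_mem_le G 0 q' hq'
            omega
        have emu : mu (L-1) + 1 = mu L :=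
          ((jump_zero_iff mu L).mp (hoffL L hQlt le_rfl)).symm
        have egf : gf mu L = mu (G.map Prod.fst).sum - jump mu (G.map Prod.fst).sum := by
          have := gf_val mu hmu0 (G.map Prod.fst).sum L (Or.inr ⟨hQ1, hjQne⟩) (by omega)
            (fun m a b => hoffL m a (by omega))
          rw [if_neg (by omega)] at this
          exact this
        have hmuQ : mu (G.map Prod.fst).sum
            = (((G.map Prod.fst).sum : ℕ) : ZMod n) + (((G.map Prod.snd).sum : ℕ) : ZMod n) := by
          rw [hmu, muOf_eq L k G hpos1 hW hK2 _ hQL, sum_findH G 0 _ hpos1 (by omega)]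
        have egf2 : gf mu L = ↑k := by
          rw [egf, hmuQ, hjQ, hHcast]
          linear_combination hTK3
        rw [emu, egf2, hmuL, Multiset.pair_comm]
  exact ⟨⟨htail, lamOf mu, rfl, hlamL, fun ℓ hℓ => ⟨hmem ℓ hℓ, rfl⟩⟩, hmkM⟩

end PGBaux

/-- Let `n ≥ 2`, `0 ≤ k ≤ n-1` and `L ≥ 0`.  The map `p ↦ M(p)` assigning
to each path its interpolating matrix is a bijection from `P_L(2Λ_0, Λ_k)` onto the set
`G_L(2Λ_0, Λ_k)` of interpolating matrices satisfying K1, K2 and K3. -/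
theorem path_graph_bijection (n : ℕ) (hn : 2 ≤ n) (k : ℕ) (hk : k ≤ n - 1) (L : ℕ) :
    Set.BijOn (Mmat n L) (pathSet n L 0 0 (k : ZMod n))
      {G : List (ℕ × ℕ) | isKG n L k G} := by
  haveI : NeZero n := ⟨by omega⟩
  refine ⟨?_, ?_, ?_⟩
  · -- MapsTo
    intro mu hmu
    exact PGBaux.forward hn L k mu hmu
  · -- InjOn
    intro mu hmu mu' hmu' heq
    obtain ⟨htail, lam, hlam0, hlamL, hsteps⟩ := hmu
    obtain ⟨htail', lam', hlam0', hlamL', hsteps'⟩ := hmu'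
    rcases Nat.eq_zero_or_pos L with rfl | hL
    · funext ℓ
      rw [htail ℓ (by omega), htail' ℓ (by omega)]
    · have hmu0 : mu 0 = 0 := by
        have := (hsteps 0 (by omega)).1
        rw [hlam0] at this
        rcases Multiset.mem_cons.mp this with h | h
        · exact h
        · exact Multiset.mem_singleton.mp h
      have hmu0' : mu' 0 = 0 := by
        have := (hsteps' 0 (by omega)).1
        rw [hlam0'] at this
        rcases Multiset.mem_cons.mp this with h | h
        · exact h
        · exact Multiset.mem_singleton.mp h
      unfold Mmat at heq
      obtain ⟨hwalls, hjumps⟩ := PGBaux.MREC mu mu' (wallPositions n L mu)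
        (wallPositions n L mu') 0
        (PGBaux.walls_chain L mu) (PGBaux.walls_chain L mu') heq
      have hjall : ∀ m, 1 ≤ m → m ≤ L → PGBaux.jump mu m = PGBaux.jump mu' m := by
        intro m h1 h2
        by_cases hm : m ∈ wallPositions n L mu
        · exact hjumps m hm
        · have h0 : PGBaux.jump mu m = 0 := by
            by_contra hc
            exact hm ((PGBaux.mem_wallPositions L mu m).mpr ⟨h1, h2, hc⟩)
          have h0' : PGBaux.jump mu' m = 0 := by
            by_contra hc
            rw [hwalls] at hm
            exact hm ((PGBaux.mem_wallPositions L mu' m).mpr ⟨h1, h2, hc⟩)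
          rw [h0, h0']
      funext ℓ
      rcases Nat.lt_or_ge ℓ L with hlt | hge
      · rw [PGBaux.telescope mu ℓ, PGBaux.telescope mu' ℓ, hmu0, hmu0']
        have hmaps : (List.range ℓ).map (fun m => PGBaux.jump mu (m+1))
            = (List.range ℓ).map (fun m => PGBaux.jump mu' (m+1)) := by
          apply List.map_congr_left
          intro m hm
          rw [List.mem_range] at hm
          exact hjall (m+1) (by omega) (by omega)
        rw [hmaps]
      · rw [htail ℓ hge, htail' ℓ hge]
  · -- SurjOn
    intro G hG
    simp only [Set.mem_setOf_eq] at hG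
    rw [PGBaux.isKG_iff] at hG
    obtain ⟨hpos, hW, hK2, hK3⟩ := hG
    rcases Nat.eq_zero_or_pos L with rfl | hL
    · have hGnil : G = [] := by
        cases G with
        | nil => rfl
        | cons p r =>
            have := (hpos p (List.mem_cons_self)).1
            simp only [List.map_cons, List.sum_cons] at hW
            omega
      subst hGnil
      simp only [List.map_nil, List.sum_nil, zero_add] at hK2
      have hk0 : (k : ZMod n) = 0 := (PGBaux.modn_iff k).mp hK2
      refine ⟨fun _ => 0 + 0 - (k:ZMod n) + ((0:ℕ) : ZMod n),
        ⟨fun ℓ _ => rfl, fun _ => {0,0}, rfl, ?_, fun ℓ hℓ => absurd hℓ (by omega)⟩, ?_⟩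
      · rw [hk0]; simp
      · show Mmat n 0 _ = []
        unfold Mmat
        rw [PGBaux.walls_L0]
        rfl
    · obtain ⟨hmem, hM⟩ := PGBaux.backward hn L k hL G hpos hW hK2 hK3
      exact ⟨PGBaux.muOf n L k G, hmem, hM⟩
end

section
/- Let n ≥ 2 and let M = ((w_1,h_1),…,(w_N,h_N)) be an interpolating matrix satisfying condition K3 (with h_0 = n). Call a position j ∈ {1,…,N} a candidate if either (a) h_{j−1}+w_j+h_j = n, j ≥ 2 and w_{j−1} > 1, or (b) h_{j−1}+w_j+h_j = 2n and w_j > 2(n−h_j), or (c) h_{j−1}+w_j+h_j ≥ 3n. Then M has no candidate positions if and only if h_{j−1}+w_j+h_j = 2n and h_{j−1} ≥ h_j for all 1 ≤ j ≤ N, i.e. if and only if M is the parent associated to some m ∈ (ℤ_{≥0})^{n−1}. -/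
/-- Position `j ∈ {1,…,N}` is a *candidate* of the interpolating matrix `G` if either
(a) `h_{j-1} + w_j + h_j = n`, `j ≥ 2` and `w_{j-1} > 1`, or
(b) `h_{j-1} + w_j + h_j = 2n` and `w_j > 2(n - h_j)`, or
(c) `h_{j-1} + w_j + h_j ≥ 3n`. -/
def isCandidate (n : ℕ) (G : List (ℕ × ℕ)) (j : ℕ) : Prop :=
  (hseq n G (j - 1) + wseq G j + hseq n G j = n ∧ 2 ≤ j ∧ 1 < wseq G (j - 1)) ∨
  (hseq n G (j - 1) + wseq G j + hseq n G j = 2 * n ∧ 2 * (n - hseq n G j) < wseq G j) ∨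
  (3 * n ≤ hseq n G (j - 1) + wseq G j + hseq n G j)

/-- `G` is the parent associated to `m = (m_1,…,m_{n-1}) ∈ (ℤ_{≥0})^{n-1}`:
its length is `N = m_1 + ⋯ + m_{n-1}`, its height sequence `(h_1,…,h_N)` is weakly
decreasing and contains each value `i ∈ {1,…,n-1}` exactly `m_i` times, and
`w_i = 2n - h_{i-1} - h_i` for `1 ≤ i ≤ N` (with `h_0 = n`). -/
def isParent (n : ℕ) (m : ℕ → ℕ) (G : List (ℕ × ℕ)) : Prop :=
  G.length = ∑ t ∈ Finset.Icc 1 (n - 1), m t ∧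
  (∀ i j : ℕ, 1 ≤ i → i ≤ j → j ≤ G.length → hseq n G j ≤ hseq n G i) ∧
  (∀ t ∈ Finset.Icc 1 (n - 1),
    ((Finset.Icc 1 G.length).filter (fun a => hseq n G a = t)).card = m t) ∧
  (∀ i ∈ Finset.Icc 1 G.length,
    (wseq G i : ℤ) = 2 * n - hseq n G (i - 1) - hseq n G i)

/-- Let `n ≥ 2` and let `G = ((w_1,h_1),…,(w_N,h_N))` be an interpolating
matrix (pairs of positive integers) satisfying condition K3 (with `h_0 = n`).  Then `G` has
no candidate positions iff `h_{j-1} + w_j + h_j = 2n` and `h_{j-1} ≥ h_j` for all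
`1 ≤ j ≤ N`, i.e. iff `G` is the parent associated to some `m ∈ (ℤ_{≥0})^{n-1}`. -/
theorem parent_characterization (n : ℕ) (hn : 2 ≤ n) (G : List (ℕ × ℕ))
    (hpos : ∀ p ∈ G, 0 < p.1 ∧ 0 < p.2)
    (hK3 : ∀ i ∈ Finset.Icc 1 G.length,
      (hseq n G (i - 1) + wseq G i + hseq n G i) % n = 0 ∧
      0 < hseq n G i ∧ hseq n G i < n) :
    ((∀ j ∈ Finset.Icc 1 G.length, ¬ isCandidate n G j) ↔
      (∀ j ∈ Finset.Icc 1 G.length,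
        hseq n G (j - 1) + wseq G j + hseq n G j = 2 * n ∧
        hseq n G j ≤ hseq n G (j - 1))) ∧
    ((∀ j ∈ Finset.Icc 1 G.length, ¬ isCandidate n G j) ↔
      ∃ m : ℕ → ℕ, (∀ t, m t ≠ 0 → 1 ≤ t ∧ t ≤ n - 1) ∧ isParent n m G) := by
  set N := G.length with hNdef
  have h0 : hseq n G 0 = n := by simp [hseq]
  have hgetmem : ∀ j, 1 ≤ j → j ≤ N → G.getD (j - 1) (0, 0) ∈ G := by
    intro j h1 h2
    have hlt : j - 1 < N := by omega
    rw [List.getD_eq_getElem _ _ hlt]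
    exact List.getElem_mem _
  have hwpos : ∀ j, 1 ≤ j → j ≤ N → 0 < wseq G j := fun j h1 h2 =>
    (hpos _ (hgetmem j h1 h2)).1
  have hhlt : ∀ j, 1 ≤ j → j ≤ N → 0 < hseq n G j ∧ hseq n G j < n := by
    intro j h1 h2
    have := hK3 j (Finset.mem_Icc.mpr ⟨h1, h2⟩)
    exact ⟨this.2.1, this.2.2⟩
  have hub : ∀ j, j ≤ N → hseq n G j ≤ n := by
    intro j hj
    rcases Nat.eq_zero_or_pos j with h | h
    · rw [h, h0]
    · exact le_of_lt (hhlt j h hj).2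
  -- Forward direction of the first iff
  have key : (∀ j ∈ Finset.Icc 1 N, ¬ isCandidate n G j) →
      ∀ j ∈ Finset.Icc 1 N,
        hseq n G (j - 1) + wseq G j + hseq n G j = 2 * n ∧
        hseq n G j ≤ hseq n G (j - 1) := by
    intro hnc
    have hsum : ∀ j, 1 ≤ j → j ≤ N →
        hseq n G (j - 1) + wseq G j + hseq n G j = 2 * n := by
      intro j
      induction j using Nat.strong_induction_on with
      | _ j ih =>
        intro h1 h2
        have hmem : j ∈ Finset.Icc 1 N := Finset.mem_Icc.mpr ⟨h1, h2⟩
        obtain ⟨k, hk⟩ : n ∣ hseq n G (j - 1) + wseq G j + hseq n G j :=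
          Nat.dvd_of_mod_eq_zero (hK3 j hmem).1
        have hw := hwpos j h1 h2
        have hhj := hhlt j h1 h2
        have hub1 : hseq n G (j - 1) ≤ n := hub (j - 1) (by omega)
        have hnc' := hnc j hmem
        unfold isCandidate at hnc'
        push_neg at hnc'
        obtain ⟨hnca, hncb, hncc⟩ := hnc'
        have h3 : hseq n G (j - 1) + wseq G j + hseq n G j < 3 * n := by omega
        have hk12 : k = 1 ∨ k = 2 := by
          have hk0 : k ≠ 0 := by rintro rfl; omega
          have hk3 : k < 3 := by
            by_contra hge
            push_neg at hge
            have : 3 * n ≤ n * k := by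
              calc 3 * n = n * 3 := by ring
                _ ≤ n * k := Nat.mul_le_mul_left n hge
            omega
          omega
        rcases hk12 with rfl | rfl
        · -- sum = n : derive a contradiction
          exfalso
          rcases Nat.lt_or_ge j 2 with hj2 | hj2
          · have hj1 : j = 1 := by omega
            subst hj1
            rw [show (1:ℕ) - 1 = 0 from rfl, h0] at hk
            omega
          · have hwj1 : wseq G (j - 1) = 1 := by
              have hle := hnca (by omega) hj2
              have hwp := hwpos (j - 1) (by omega) (by omega)
              omega
            have hsum' := ih (j - 1) (by omega) (by omega) (by omega)
            rw [show j - 1 - 1 = j - 2 from by omega, hwj1] at hsum'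
            have hh1 := hhlt (j - 1) (by omega) (by omega)
            rcases Nat.lt_or_ge j 3 with hj3 | hj3
            · have hj2eq : j = 2 := by omega
              subst hj2eq
              rw [show (2:ℕ) - 2 = 0 from rfl, h0] at hsum'
              -- hsum' : n + 1 + h_1 = 2n, so h_1 = n - 1
              omega
            · have hh2 := hhlt (j - 2) (by omega) (by omega)
              omega
        · omega
    intro j hj
    have hmem := Finset.mem_Icc.mp hj
    have hs := hsum j hmem.1 hmem.2
    refine ⟨hs, ?_⟩
    have hnc' := hnc j hj
    unfold isCandidate at hnc'
    push_neg at hnc'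
    have hb := hnc'.2.1 hs
    have hhj := hhlt j hmem.1 hmem.2
    have hub1 : hseq n G (j - 1) ≤ n := hub (j - 1) (by omega)
    omega
  -- Backward direction of the first iff
  have rev : (∀ j ∈ Finset.Icc 1 N,
        hseq n G (j - 1) + wseq G j + hseq n G j = 2 * n ∧
        hseq n G j ≤ hseq n G (j - 1)) →
      ∀ j ∈ Finset.Icc 1 N, ¬ isCandidate n G j := by
    intro H j hj hc
    obtain ⟨hs, hm⟩ := H j hj
    rcases hc with ⟨h1, -, -⟩ | ⟨h1, h2⟩ | h1 <;> omega
  have iff1 : (∀ j ∈ Finset.Icc 1 N, ¬ isCandidate n G j) ↔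
      (∀ j ∈ Finset.Icc 1 N,
        hseq n G (j - 1) + wseq G j + hseq n G j = 2 * n ∧
        hseq n G j ≤ hseq n G (j - 1)) := ⟨key, rev⟩
  refine ⟨iff1, iff1.trans ?_⟩
  constructor
  · intro H
    have hmono : ∀ i j : ℕ, 1 ≤ i → i ≤ j → j ≤ N → hseq n G j ≤ hseq n G i := by
      have aux : ∀ j, j ≤ N → ∀ i, 1 ≤ i → i ≤ j → hseq n G j ≤ hseq n G i := by
        intro j
        induction j with
        | zero => intro _ i hi hij; omega
        | succ k ihk =>
          intro hk i hi hij
          rcases Nat.lt_or_ge i (k + 1) with h | h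
          · have h1 := ihk (by omega) i hi (by omega)
            have h2 := (H (k + 1) (Finset.mem_Icc.mpr ⟨by omega, hk⟩)).2
            rw [show k + 1 - 1 = k from rfl] at h2
            exact le_trans h2 h1
          · have : i = k + 1 := by omega
            rw [this]
      intro i j hi hij hj
      exact aux j hj i hi hij
    refine ⟨fun t => ((Finset.Icc 1 N).filter (fun a => hseq n G a = t)).card,
      ?_, ?_, hmono, fun t _ => rfl, ?_⟩
    · intro t ht
      obtain ⟨a, ha⟩ := Finset.card_ne_zero.mp ht
      obtain ⟨haI, hav⟩ := Finset.mem_filter.mp ha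
      obtain ⟨ha1, ha2⟩ := Finset.mem_Icc.mp haI
      have := hhlt a ha1 ha2
      omega
    · have hcard : (Finset.Icc 1 N).card = N := by simp
      calc N = (Finset.Icc 1 N).card := hcard.symm
        _ = ∑ t ∈ Finset.Icc 1 (n - 1),
            ((Finset.Icc 1 N).filter (fun a => hseq n G a = t)).card := by
          apply Finset.card_eq_sum_card_fiberwise
          intro a ha
          obtain ⟨ha1, ha2⟩ := Finset.mem_Icc.mp ha
          have := hhlt a ha1 ha2
          exact Finset.mem_Icc.mpr ⟨by omega, by omega⟩
    · intro i hi
      have hs := (H i hi).1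
      push_cast
      omega
  · rintro ⟨m, hsupp, hlen, hmono, hcnt, hw⟩ j hj
    obtain ⟨hj1, hj2⟩ := Finset.mem_Icc.mp hj
    have hwj := hw j hj
    have hhj := hhlt j hj1 hj2
    constructor
    · omega
    · rcases Nat.lt_or_ge j 2 with h | h
      · have hj1' : j = 1 := by omega
        subst hj1'
        rw [show (1:ℕ) - 1 = 0 from rfl, h0]
        omega
      · exact hmono (j - 1) j (by omega) (by omega) hj2
end

section
/- Let n ≥ 2, 0 ≤ j ≤ n−1, 0 ≤ k ≤ n−1, L ≥ 0, and let p ∈ P_L(Λ_0+Λ_j,Λ_k) be a path with interpolating matrix M(p) and associated node count |G(p)|. Then |G(p)| = n·E(p) + k(j−k) if k ≤ j, and |G(p)| = n·E(p) + (k−j)(n−k) if k > j, where E(p) is the energy of p. -/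
/-- `θ(x) = 1` if `x ≥ 0` and `θ(x) = 0` if `x < 0`. -/
def theta (x : ℤ) : ℤ := if 0 ≤ x then 1 else 0

/-- The energy `E(p) = Σ_{ℓ=1}^L ℓ (θ(μ_{ℓ-1} - μ_ℓ) - θ(μ̄_{ℓ-1} - μ̄_ℓ))` of a path with
step sequence `mu`, where each `μ_ℓ` is taken through its representative in `{0,…,n-1}`
and `μ̄_ℓ` is the representative of `i+j-k+ℓ (mod n)` (the ground-state path labels). -/
def energy (n : ℕ) (L : ℕ) (i j k : ZMod n) (mu : ℕ → ZMod n) : ℤ :=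
  ∑ ℓ ∈ Finset.Icc 1 L, (ℓ : ℤ) *
    (theta ((mu (ℓ - 1)).val - (mu ℓ).val)
      - theta (((i + j - k + ((ℓ - 1 : ℕ) : ZMod n)).val : ℤ)
          - ((i + j - k + (ℓ : ZMod n)).val : ℤ)))

/-- The node count `|G| = Σ_{i=1}^N h_i (w_1 + ⋯ + w_i)` of an interpolating matrix. -/
def nodes (G : List (ℕ × ℕ)) : ℕ :=
  ∑ i ∈ Finset.Icc 1 G.length, (G.getD (i - 1) (0, 0)).2 *
    ∑ j ∈ Finset.Icc 1 i, (G.getD (j - 1) (0, 0)).1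

namespace NEQ

/-! ### The ground-state partial-sum function `g` -/

def g (n x : ℕ) : ℕ := ∑ t ∈ Finset.range x, t % n

lemma g_succ (n x : ℕ) : g n (x + 1) = g n x + x % n := Finset.sum_range_succ _ x

lemma g_add (n x y : ℕ) : g n (x + y) = g n x + ∑ t ∈ Finset.range y, (x + t) % n :=
  Finset.sum_range_add (fun t => t % n) x y

lemma g_n_add (n x : ℕ) : g n (n + x) = g n n + g n x := by
  rw [g_add]
  exact congrArg _ (Finset.sum_congr rfl fun t _ => Nat.add_mod_left n t)

lemma g_mod (n : ℕ) (hn : 0 < n) : ∀ x, g n x = x / n * g n n + g n (x % n) := by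
  intro x
  induction x using Nat.strong_induction_on with
  | _ x ih =>
    rcases lt_or_ge x n with h | h
    · rw [Nat.div_eq_of_lt h, Nat.mod_eq_of_lt h]; simp
    · obtain ⟨y, rfl⟩ : ∃ y, x = n + y := ⟨x - n, by omega⟩
      rw [g_n_add, ih y (by omega), Nat.add_comm n y, Nat.add_div_right _ hn,
        Nat.add_mod_right]
      ring

lemma two_g (n : ℕ) : ∀ x, x ≤ n → 2 * g n x = x * (x - 1) := by
  intro x
  induction x with
  | zero => simp [g]
  | succ x ih =>
    intro h
    rw [g_succ, Nat.mul_add, ih (by omega), Nat.mod_eq_of_lt (by omega)]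
    cases x with
    | zero => simp
    | succ y => simp only [Nat.succ_sub_one]; ring

lemma two_g_int (n : ℕ) (hn : 0 < n) (x : ℕ) :
    2 * (g n x : ℤ) = (x / n : ℕ) * ((n : ℤ) * ((n : ℤ) - 1))
      + ((x % n : ℕ) : ℤ) * (((x % n : ℕ) : ℤ) - 1) := by
  have h1 := g_mod n hn x
  have h2 := two_g n n le_rfl
  have h3 := two_g n (x % n) (Nat.mod_lt x hn).le
  have key : 2 * g n x = x / n * (2 * g n n) + 2 * g n (x % n) := by
    rw [h1]; ring
  rw [h2, h3] at key
  have := congrArg (Nat.cast : ℕ → ℤ) key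
  push_cast at this
  rw [this]
  rcases Nat.eq_zero_or_pos (x % n) with h0 | h0
  · rw [h0]; push_cast [Nat.cast_sub (show 1 ≤ n by omega)]; ring
  · push_cast [Nat.cast_sub (show 1 ≤ n by omega), Nat.cast_sub h0]; ring

/-! ### The `val` identity for steps -/

lemma val_sub_sub_one (n : ℕ) (hn : 2 ≤ n) (x y : ZMod n) :
    (((y - x - 1).val : ℕ) : ℤ)
      = ((y.val : ℕ) : ℤ) - ((x.val : ℕ) : ℤ) - 1
        + (n : ℤ) * theta (((x.val : ℕ) : ℤ) - ((y.val : ℕ) : ℤ)) := by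
  haveI : NeZero n := ⟨by omega⟩
  have hx : x.val < n := ZMod.val_lt x
  have hy : y.val < n := ZMod.val_lt y
  have e1 : ((n - x.val : ℕ) : ZMod n) = - x := by
    rw [Nat.cast_sub hx.le, ZMod.natCast_self, zero_sub, ZMod.natCast_val, ZMod.cast_id]
  have e2 : ((n - 1 : ℕ) : ZMod n) = - 1 := by
    rw [Nat.cast_sub (show 1 ≤ n by omega), ZMod.natCast_self, zero_sub, Nat.cast_one]
  have key : y - x - 1 = ((y.val + (n - x.val) + (n - 1) : ℕ) : ZMod n) := by
    rw [Nat.cast_add, Nat.cast_add, e1, e2, ZMod.natCast_val, ZMod.cast_id]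
    ring
  rw [key, ZMod.val_natCast]
  unfold theta
  split
  · -- y.val ≤ x.val : the sum is in [n, 2n)
    next h =>
      have hyx : y.val ≤ x.val := by omega
      have hm : n ≤ y.val + (n - x.val) + (n - 1) := by omega
      rw [Nat.mod_eq_sub_mod hm, Nat.mod_eq_of_lt (by omega)]
      have : ((y.val + (n - x.val) + (n - 1) - n : ℕ) : ℤ)
          = (y.val : ℤ) + (n - x.val) - 1 := by
        omega
      omega
  · next h =>
      have hyx : x.val < y.val := by omega
      rw [Nat.mod_eq_sub_mod (by omega), Nat.mod_eq_sub_mod (by omega),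
        Nat.mod_eq_of_lt (by omega)]
      omega

/-! ### Rewriting `nodes` -/

def hts (G : List (ℕ × ℕ)) : ℕ := ∑ i ∈ Finset.range G.length, (G.getD i (0, 0)).2

lemma nodes_eq_range (G : List (ℕ × ℕ)) :
    nodes G = ∑ i ∈ Finset.range G.length,
      (G.getD i (0, 0)).2 * ∑ j ∈ Finset.range (i + 1), (G.getD j (0, 0)).1 := by
  unfold nodes
  rw [← Finset.Ico_add_one_right_eq_Icc, Finset.sum_Ico_eq_sum_range]
  have hL : G.length + 1 - 1 = G.length := by omega
  rw [hL]
  refine Finset.sum_congr rfl fun i _ => ?_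
  have h1 : 1 + i - 1 = i := by omega
  rw [h1, ← Finset.Ico_add_one_right_eq_Icc, Finset.sum_Ico_eq_sum_range]
  have h2 : 1 + i + 1 - 1 = i + 1 := by omega
  rw [h2]
  refine congrArg _ (Finset.sum_congr rfl fun m _ => ?_)
  have h3 : 1 + m - 1 = m := by omega
  rw [h3]

lemma hts_cons (a : ℕ × ℕ) (G : List (ℕ × ℕ)) : hts (a :: G) = a.2 + hts G := by
  unfold hts
  rw [List.length_cons, Finset.sum_range_succ']
  simp [List.getD_cons_succ, List.getD_cons_zero, Nat.add_comm]

lemma nodes_cons (w h : ℕ) (G : List (ℕ × ℕ)) :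
    nodes ((w, h) :: G) = h * w + w * hts G + nodes G := by
  rw [nodes_eq_range, nodes_eq_range, List.length_cons, Finset.sum_range_succ']
  have inner : ∀ i : ℕ, ∑ j ∈ Finset.range (i + 1 + 1), (((w, h) :: G).getD j (0, 0)).1
      = w + ∑ j ∈ Finset.range (i + 1), (G.getD j (0, 0)).1 := by
    intro i
    rw [Finset.sum_range_succ']
    simp [List.getD_cons_succ, List.getD_cons_zero, Nat.add_comm]
  have main : ∑ i ∈ Finset.range G.length,
        ((((w, h) :: G).getD (i + 1) (0, 0)).2 *
          ∑ j ∈ Finset.range (i + 1 + 1), (((w, h) :: G).getD j (0, 0)).1)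
      = w * hts G + ∑ i ∈ Finset.range G.length,
          (G.getD i (0, 0)).2 * ∑ j ∈ Finset.range (i + 1), (G.getD j (0, 0)).1 := by
    rw [Finset.sum_congr rfl (fun i _ => by
      rw [List.getD_cons_succ, inner i, Nat.mul_add])]
    rw [Finset.sum_add_distrib]
    congr 1
    rw [hts, Finset.mul_sum]
    exact Finset.sum_congr rfl fun i _ => Nat.mul_comm _ _
  rw [main]
  simp [List.getD_cons_zero, Nat.add_comm, Nat.add_assoc, Nat.add_left_comm]

lemma nodes_nil : nodes ([] : List (ℕ × ℕ)) = 0 := by simp [nodes]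

lemma hts_nil : hts ([] : List (ℕ × ℕ)) = 0 := by simp [hts]

lemma nodes_mkM (n : ℕ) (mu : ℕ → ZMod n) :
    ∀ (xs : List ℕ) (prev : ℕ), List.Chain (· < ·) prev xs →
      nodes (mkM n mu xs prev) + prev * hts (mkM n mu xs prev)
        = (xs.map (fun x => (mu x - mu (x - 1) - 1).val * x)).sum := by
  intro xs
  induction xs with
  | nil => intro prev _; simp [mkM, nodes_nil, hts_nil]
  | cons x xs ih =>
    intro prev hc
    unfold List.Chain at hc
    rw [List.isChain_cons_cons] at hc
    obtain ⟨hlt, hchain⟩ := hc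
    obtain ⟨d, rfl⟩ : ∃ d, x = prev + d := ⟨x - prev, by omega⟩
    rw [mkM, nodes_cons, hts_cons]
    have hd : prev + d - prev = d := by omega
    rw [hd]
    have := ih (prev + d) hchain
    rw [List.map_cons, List.sum_cons, ← this]
    ring

lemma chain_wall (n L : ℕ) (mu : ℕ → ZMod n) :
    List.Chain (· < ·) 0 (wallPositions n L mu) := by
  unfold List.Chain
  rw [List.isChain_iff_pairwise]
  rw [List.pairwise_cons]
  constructor
  · intro x hx
    have := (List.mem_filter.mp hx).2
    simp only [decide_eq_true_eq] at this
    omega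
  · exact (List.pairwise_lt_range (n := L + 1)).filter _

lemma filter_map_sum (p : ℕ → Bool) (f : ℕ → ℕ) (m : ℕ) :
    (((List.range m).filter p).map f).sum
      = ∑ ℓ ∈ Finset.range m, if p ℓ then f ℓ else 0 := by
  induction m with
  | zero => simp
  | succ m ih =>
    rw [List.range_succ, List.filter_append, List.map_append, List.sum_append, ih,
      Finset.sum_range_succ]
    by_cases h : p m <;> simp [h]

lemma nodes_Mmat (n L : ℕ) (hn : 2 ≤ n) (mu : ℕ → ZMod n) :
    nodes (Mmat n L mu)
      = ∑ m ∈ Finset.range L, (mu (m + 1) - mu m - 1).val * (m + 1) := by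
  haveI : NeZero n := ⟨by omega⟩
  have h1 := nodes_mkM n mu (wallPositions n L mu) 0 (chain_wall n L mu)
  rw [Nat.zero_mul, Nat.add_zero] at h1
  rw [Mmat, h1, wallPositions, filter_map_sum, Finset.sum_range_succ']
  have h0 : (if (decide (1 ≤ 0 ∧ mu 0 - mu (0 - 1) - 1 ≠ 0) : Bool)
      then (mu 0 - mu (0 - 1) - 1).val * 0 else 0) = 0 := by
    simp
  rw [h0, Nat.add_zero]
  refine Finset.sum_congr rfl fun m _ => ?_
  have hm1 : m + 1 - 1 = m := by omega
  by_cases h : mu (m + 1) - mu m - 1 = 0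
  · simp [hm1, h, ZMod.val_eq_zero]
  · simp [hm1, h]

/-! ### Telescoping -/

lemma telescope (c : ℕ → ℤ) (L : ℕ) :
    ∑ m ∈ Finset.range L, ((m : ℤ) + 1) * (c (m + 1) - c m)
      = L * c L - ∑ m ∈ Finset.range L, c m := by
  induction L with
  | zero => simp
  | succ L ih =>
    rw [Finset.sum_range_succ, ih, Finset.sum_range_succ]
    push_cast
    ring

/-! ### The final arithmetic identity -/

lemma key_arith (n j k L A v s0 qA rA qv rv qs rs : ℤ) (hn : 2 ≤ n)
    (hj : 0 ≤ j) (hjn : j < n) (hk : 0 ≤ k) (hkn : k < n)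
    (hs0 : s0 = if k ≤ j then j - k else n + j - k)
    (hsum : A + v = j + L)
    (hA : A = n * qA + rA) (hv : v = n * qv + rv) (hs : s0 + L = n * qs + rs)
    (hcase : (rA = k ∧ rv = rs) ∨ (rA = rs ∧ rv = k)) :
    j * (j - 1) + (qs * (n * (n - 1)) + rs * (rs - 1))
      = s0 * (s0 - 1) + (qA * (n * (n - 1)) + rA * (rA - 1))
        + (qv * (n * (n - 1)) + rv * (rv - 1))
        + 2 * (if k ≤ j then k * (j - k) else (k - j) * (n - k)) := by
  have hn0 : (n : ℤ) ≠ 0 := by omega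
  by_cases hkj : k ≤ j
  · rw [if_pos hkj] at hs0
    rw [if_pos hkj]
    have hq : qs = qA + qv := by
      have h : n * qs = n * (qA + qv) := by
        rcases hcase with ⟨h1, h2⟩ | ⟨h1, h2⟩ <;> (subst h1; subst h2) <;> nlinarith [hs, hsum, hA, hv]
      exact mul_left_cancel₀ hn0 h
    subst hq
    rcases hcase with ⟨h1, h2⟩ | ⟨h1, h2⟩ <;> (subst h1; subst h2; subst hs0) <;> ring
  · rw [if_neg hkj] at hs0
    rw [if_neg hkj]
    have hq : qs = qA + qv + 1 := by
      have h : n * qs = n * (qA + qv + 1) := by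
        rcases hcase with ⟨h1, h2⟩ | ⟨h1, h2⟩ <;> (subst h1; subst h2) <;> nlinarith [hs, hsum, hA, hv]
      exact mul_left_cancel₀ hn0 h
    subst hq
    rcases hcase with ⟨h1, h2⟩ | ⟨h1, h2⟩ <;> (subst h1; subst h2; subst hs0) <;> ring

end NEQ

theorem nodes_eq_energy (n : ℕ) (hn : 2 ≤ n) (j k : ℕ) (hj : j ≤ n - 1) (hk : k ≤ n - 1)
    (L : ℕ) (mu : ℕ → ZMod n)
    (hmu : mu ∈ pathSet n L 0 (j : ZMod n) (k : ZMod n)) :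
    (nodes (Mmat n L mu) : ℤ)
      = (n : ℤ) * energy n L 0 (j : ZMod n) (k : ZMod n) mu
        + (if k ≤ j then (k : ℤ) * ((j : ℤ) - k) else ((k : ℤ) - j) * ((n : ℤ) - k)) := by
  haveI : NeZero n := ⟨by omega⟩
  have hn0 : 0 < n := by omega
  have hjn : j < n := by omega
  have hkn : k < n := by omega
  obtain ⟨hend, lam, hlam0, hlamL, hstep⟩ := hmu
  set s0 : ℕ := ((0 : ZMod n) + (j : ZMod n) - (k : ZMod n)).val with hs0def
  have hs0lt : s0 < n := ZMod.val_lt _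
  -- ground-state values
  have habar : ∀ t : ℕ, ((0 : ZMod n) + (j : ZMod n) - (k : ZMod n) + (t : ZMod n)).val
      = (s0 + t) % n := by
    intro t
    have : (0 : ZMod n) + (j : ZMod n) - (k : ZMod n) + (t : ZMod n)
        = ((s0 + t : ℕ) : ZMod n) := by
      push_cast
      rw [hs0def, ZMod.natCast_val, ZMod.cast_id]
    rw [this, ZMod.val_natCast]
  -- rewrite the energy as a sum over `range L`
  have henergy : energy n L 0 (j : ZMod n) (k : ZMod n) mu
      = ∑ m ∈ Finset.range L, ((m : ℤ) + 1) *
          (theta (((mu m).val : ℤ) - ((mu (m + 1)).val : ℤ))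
            - theta ((((s0 + m) % n : ℕ) : ℤ) - (((s0 + (m + 1)) % n : ℕ) : ℤ))) := by
    unfold energy
    rw [← Finset.Ico_add_one_right_eq_Icc, Finset.sum_Ico_eq_sum_range]
    have hL : L + 1 - 1 = L := by omega
    rw [hL]
    refine Finset.sum_congr rfl fun m _ => ?_
    have h1 : 1 + m - 1 = m := by omega
    have h2 : 1 + m = m + 1 := by omega
    rw [h1, h2, habar, habar]
    push_cast
    ring
  -- the node count as a sum
  have hnodes := NEQ.nodes_Mmat n L hn mu
  -- per-term identity and telescoping
  have hmuL : mu L = (0 : ZMod n) + (j : ZMod n) - (k : ZMod n) + (L : ZMod n) :=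
    hend L le_rfl
  have hcL : ((mu L).val : ℤ) - (((s0 + L) % n : ℕ) : ℤ) = 0 := by
    rw [hmuL, habar]
    ring
  have htel : ∑ m ∈ Finset.range L, ((m : ℤ) + 1) *
        ((((mu (m + 1)).val : ℤ) - (((s0 + (m + 1)) % n : ℕ) : ℤ))
          - (((mu m).val : ℤ) - (((s0 + m) % n : ℕ) : ℤ)))
      = (L : ℤ) * (((mu L).val : ℤ) - (((s0 + L) % n : ℕ) : ℤ))
        - ∑ m ∈ Finset.range L, (((mu m).val : ℤ) - (((s0 + m) % n : ℕ) : ℤ)) := by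
    simpa using NEQ.telescope
      (fun t => ((mu t).val : ℤ) - (((s0 + t) % n : ℕ) : ℤ)) L
  have hmain : ((∑ m ∈ Finset.range L, (mu (m + 1) - mu m - 1).val * (m + 1) : ℕ) : ℤ)
      = (n : ℤ) * (∑ m ∈ Finset.range L, ((m : ℤ) + 1) *
          (theta (((mu m).val : ℤ) - ((mu (m + 1)).val : ℤ))
            - theta ((((s0 + m) % n : ℕ) : ℤ) - (((s0 + (m + 1)) % n : ℕ) : ℤ))))
        + ((L : ℤ) * (((mu L).val : ℤ) - (((s0 + L) % n : ℕ) : ℤ))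
          - ∑ m ∈ Finset.range L, (((mu m).val : ℤ) - (((s0 + m) % n : ℕ) : ℤ))) := by
    rw [← htel, Finset.mul_sum, ← Finset.sum_add_distrib, Nat.cast_sum]
    refine Finset.sum_congr rfl fun m _ => ?_
    rw [Nat.cast_mul, Nat.cast_add, Nat.cast_one]
    have e1 := NEQ.val_sub_sub_one n hn (mu m) (mu (m + 1))
    have e2 := NEQ.val_sub_sub_one n hn
      ((0 : ZMod n) + (j : ZMod n) - (k : ZMod n) + (m : ZMod n))
      ((0 : ZMod n) + (j : ZMod n) - (k : ZMod n) + ((m + 1 : ℕ) : ZMod n))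
    have hzero : (0 : ZMod n) + (j : ZMod n) - (k : ZMod n) + ((m + 1 : ℕ) : ZMod n)
        - ((0 : ZMod n) + (j : ZMod n) - (k : ZMod n) + (m : ZMod n)) - 1 = 0 := by
      push_cast
      ring
    rw [hzero, habar, habar] at e2
    simp only [ZMod.val_zero, Nat.cast_zero] at e2
    linear_combination ((m : ℤ) + 1) * e1 - ((m : ℤ) + 1) * e2
  -- the two-particle invariant
  have inv : ∀ ℓ : ℕ, ℓ ≤ L → ∃ A B : ℕ, A + B = ℓ ∧
      lam ℓ = {((A : ℕ) : ZMod n), ((j + B : ℕ) : ZMod n)} ∧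
      (∑ t ∈ Finset.range ℓ, (mu t).val) + NEQ.g n j = NEQ.g n A + NEQ.g n (j + B) := by
    intro ℓ
    induction ℓ with
    | zero =>
      intro _
      refine ⟨0, 0, rfl, ?_, by simp [NEQ.g]⟩
      simpa using hlam0
    | succ ℓ ih =>
      intro hℓ
      obtain ⟨A, B, hAB, hlameq, hsum⟩ := ih (by omega)
      obtain ⟨hmem, hnext⟩ := hstep ℓ (by omega)
      rw [hlameq] at hmem hnext
      have hmem' : mu ℓ = ((A : ℕ) : ZMod n) ∨ mu ℓ = ((j + B : ℕ) : ZMod n) := by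
        simpa using hmem
      rcases hmem' with h | h
      · refine ⟨A + 1, B, by omega, ?_, ?_⟩
        · rw [hnext, h, Multiset.insert_eq_cons, Multiset.erase_cons_head,
            Multiset.insert_eq_cons]
          push_cast
          rfl
        · rw [Finset.sum_range_succ, h, ZMod.val_natCast, NEQ.g_succ]
          omega
      · refine ⟨A, B + 1, by omega, ?_, ?_⟩
        · rw [hnext, h, Multiset.insert_eq_cons]
          have hsw : (((A : ℕ) : ZMod n) ::ₘ {((j + B : ℕ) : ZMod n)}).erase
              ((j + B : ℕ) : ZMod n) = {((A : ℕ) : ZMod n)} := by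
            have : (((A : ℕ) : ZMod n) ::ₘ {((j + B : ℕ) : ZMod n)})
                = ((j + B : ℕ) : ZMod n) ::ₘ {((A : ℕ) : ZMod n)} := Multiset.cons_swap _ _ _
            rw [this, Multiset.erase_cons_head]
          rw [hsw]
          have : (j + (B + 1) : ℕ) = ((j + B : ℕ) + 1 : ℕ) := by omega
          rw [this]
          push_cast
          exact Multiset.cons_swap _ _ _
        · rw [Finset.sum_range_succ, h, ZMod.val_natCast]
          have : j + (B + 1) = (j + B) + 1 := by omega
          rw [this, NEQ.g_succ]
          omega
  obtain ⟨A, B, hAB, hlamA, hS⟩ := inv L le_rfl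
  -- identify the endpoint
  have hcL' : (0 : ZMod n) + (j : ZMod n) - (k : ZMod n) + (L : ZMod n)
      = ((s0 + L : ℕ) : ZMod n) := by
    push_cast
    rw [hs0def, ZMod.natCast_val, ZMod.cast_id]
  have hpair : (({((A : ℕ) : ZMod n), ((j + B : ℕ) : ZMod n)}) : Multiset (ZMod n))
      = {((k : ℕ) : ZMod n), ((s0 + L : ℕ) : ZMod n)} := by
    rw [← hcL', ← hlamA, hlamL]
  have hdisj : (((A : ℕ) : ZMod n) = ((k : ℕ) : ZMod n)
        ∧ ((j + B : ℕ) : ZMod n) = ((s0 + L : ℕ) : ZMod n))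
      ∨ (((A : ℕ) : ZMod n) = ((s0 + L : ℕ) : ZMod n)
        ∧ ((j + B : ℕ) : ZMod n) = ((k : ℕ) : ZMod n)) := by
    rw [Multiset.insert_eq_cons, Multiset.insert_eq_cons] at hpair
    rcases Multiset.cons_eq_cons.mp hpair with ⟨h1, h2⟩ | ⟨hne, cs, h1, h2⟩
    · left
      exact ⟨h1, by simpa using h2⟩
    · obtain ⟨hc, hcs⟩ := (Multiset.singleton_eq_cons_iff _).mp h2
      right
      rw [hcs] at h1
      exact ⟨hc.symm, by simpa using h1⟩
  have hmod : ∀ a b : ℕ, (a : ZMod n) = (b : ZMod n) → a % n = b % n := by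
    intro a b h
    rwa [ZMod.natCast_eq_natCast_iff, Nat.ModEq] at h
  have hcase : (A % n = k ∧ (j + B) % n = (s0 + L) % n)
      ∨ (A % n = (s0 + L) % n ∧ (j + B) % n = k) := by
    rcases hdisj with ⟨h1, h2⟩ | ⟨h1, h2⟩
    · left
      refine ⟨?_, hmod _ _ h2⟩
      have := hmod _ _ h1
      rwa [Nat.mod_eq_of_lt hkn] at this
    · right
      refine ⟨hmod _ _ h1, ?_⟩
      have := hmod _ _ h2
      rwa [Nat.mod_eq_of_lt hkn] at this
  -- the value of s0
  have hs0v : s0 = if k ≤ j then j - k else n + j - k := by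
    by_cases hkj : k ≤ j
    · rw [if_pos hkj]
      have h1 : (0 : ZMod n) + (j : ZMod n) - (k : ZMod n) = ((j - k : ℕ) : ZMod n) := by
        push_cast [Nat.cast_sub hkj]
        ring
      rw [hs0def, h1, ZMod.val_natCast, Nat.mod_eq_of_lt (by omega)]
    · rw [if_neg hkj]
      have h1 : (0 : ZMod n) + (j : ZMod n) - (k : ZMod n) = ((n + j - k : ℕ) : ZMod n) := by
        rw [Nat.cast_sub (show k ≤ n + j by omega), Nat.cast_add, ZMod.natCast_self]
      rw [hs0def, h1, ZMod.val_natCast, Nat.mod_eq_of_lt (by omega)]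
  -- ground-state sum
  have hgv : NEQ.g n (s0 + L) = NEQ.g n s0 + ∑ m ∈ Finset.range L, (s0 + m) % n :=
    NEQ.g_add n s0 L
  -- cast helper
  have castdm : ∀ x : ℕ, (x : ℤ) = (n : ℤ) * ((x / n : ℕ) : ℤ) + ((x % n : ℕ) : ℤ) := by
    intro x
    exact_mod_cast (Nat.div_add_mod x n).symm
  -- instantiate the key arithmetic identity
  have karith := NEQ.key_arith (n : ℤ) (j : ℤ) (k : ℤ) (L : ℤ) (A : ℤ) ((j + B : ℕ) : ℤ)
      (s0 : ℤ) ((A / n : ℕ) : ℤ) ((A % n : ℕ) : ℤ) (((j + B) / n : ℕ) : ℤ)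
      (((j + B) % n : ℕ) : ℤ) (((s0 + L) / n : ℕ) : ℤ) (((s0 + L) % n : ℕ) : ℤ)
      (by exact_mod_cast hn) (by positivity) (by exact_mod_cast hjn) (by positivity)
      (by exact_mod_cast hkn)
      (by
        by_cases hkj : k ≤ j
        · rw [if_pos (by exact_mod_cast hkj : (k : ℤ) ≤ (j : ℤ))]
          rw [hs0v, if_pos hkj]
          push_cast [Nat.cast_sub hkj]
          ring
        · rw [if_neg (by
            intro hc
            exact hkj (by exact_mod_cast hc))]
          rw [hs0v, if_neg hkj]
          push_cast [Nat.cast_sub (show k ≤ n + j by omega)]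
          ring)
      (by push_cast; omega)
      (by rw [← castdm A])
      (by rw [← castdm (j + B)])
      (by rw [← castdm (s0 + L)]; push_cast; ring)
      (by
        rcases hcase with ⟨h1, h2⟩ | ⟨h1, h2⟩
        · left; constructor <;> exact_mod_cast congrArg (Nat.cast (R := ℤ)) ‹_ = _›
        · right; constructor <;> exact_mod_cast congrArg (Nat.cast (R := ℤ)) ‹_ = _›)
  -- the 2g identities
  have tj : 2 * (NEQ.g n j : ℤ) = (j : ℤ) * ((j : ℤ) - 1) := by
    have h := NEQ.two_g_int n hn0 j
    rw [Nat.div_eq_of_lt hjn, Nat.mod_eq_of_lt hjn] at h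
    push_cast at h
    linarith
  have ts0 : 2 * (NEQ.g n s0 : ℤ) = (s0 : ℤ) * ((s0 : ℤ) - 1) := by
    have h := NEQ.two_g_int n hn0 s0
    rw [Nat.div_eq_of_lt hs0lt, Nat.mod_eq_of_lt hs0lt] at h
    push_cast at h
    linarith
  have tA := NEQ.two_g_int n hn0 A
  have tv := NEQ.two_g_int n hn0 (j + B)
  have tsL := NEQ.two_g_int n hn0 (s0 + L)
  -- assemble
  rw [hnodes, henergy, hmain, hcL, mul_zero, zero_sub]
  have hsplit : ∑ m ∈ Finset.range L, (((mu m).val : ℤ) - (((s0 + m) % n : ℕ) : ℤ))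
      = ((∑ t ∈ Finset.range L, (mu t).val : ℕ) : ℤ)
        - ((∑ m ∈ Finset.range L, (s0 + m) % n : ℕ) : ℤ) := by
    rw [Finset.sum_sub_distrib, Nat.cast_sum, Nat.cast_sum]
  rw [hsplit]
  have hgvz : ((NEQ.g n (s0 + L) : ℕ) : ℤ)
      = (NEQ.g n s0 : ℤ) + ((∑ m ∈ Finset.range L, (s0 + m) % n : ℕ) : ℤ) := by
    exact_mod_cast congrArg (Nat.cast (R := ℤ)) hgv
  have hSz : ((∑ t ∈ Finset.range L, (mu t).val : ℕ) : ℤ) + (NEQ.g n j : ℤ)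
      = (NEQ.g n A : ℤ) + (NEQ.g n (j + B) : ℤ) := by
    exact_mod_cast congrArg (Nat.cast (R := ℤ)) hS
  by_cases hkj : k ≤ j
  · rw [if_pos hkj]
    rw [if_pos (by exact_mod_cast hkj : (k : ℤ) ≤ (j : ℤ))] at karith
    linarith
  · rw [if_neg hkj]
    rw [if_neg (by
      intro hc
      exact hkj (by exact_mod_cast hc))] at karith
    linarith
end
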